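/- arXiv:1110.6821 — 2 statements merged into one kernel-verified Lean document; each statement's English description precedes it below -/
import Mathlib

section
/- Let 𝔥 be a Hoffman graph and let f₁, …, f_k be fat vertices of 𝔥. For positive integers n₁, …, n_k, let 𝔊^{n₁,…,n_k} be the Hoffman graph obtained from 𝔥 by replacing each fᵢ by a slim clique Kⁱ on nᵢ vertices and joining every neighbor of fᵢ to every vertex of Kⁱ. Then λ_min(𝔊^{n₁,…,n_k}) ≥ λ_min(𝔥), and λ_min(𝔊^{n₁,…,n_k}) converges to λ_min(𝔥) as n₁, …, n_k all tend to infinity. -/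
attribute [local instance] Classical.propDecidable

open scoped RealInnerProductSpace

/-- A Hoffman graph: a graph together with a labeling of its vertices as fat or slim,
such that every fat vertex has a slim neighbor and fat vertices are pairwise nonadjacent. -/
structure HoffmanGraph (V : Type*) where
  graph : SimpleGraph V
  IsFat : V → Prop
  fat_not_adj : ∀ {x y : V}, IsFat x → IsFat y → ¬ graph.Adj x y
  fat_slim_nbr : ∀ {x : V}, IsFat x → ∃ y : V, ¬ IsFat y ∧ graph.Adj x y

namespace HoffmanGraph

variable {V : Type*}

/-- A vertex is slim if it is not fat. -/
def IsSlim (H : HoffmanGraph V) (x : V) : Prop := ¬ H.IsFat x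

/-- The type of slim vertices. -/
abbrev Slim (H : HoffmanGraph V) := {v : V // H.IsSlim v}

/-- The number of fat neighbors of a vertex. -/
noncomputable def fatDeg (H : HoffmanGraph V) (x : V) : ℕ :=
  {f : V | H.IsFat f ∧ H.graph.Adj x f}.ncard

/-- The number of common fat neighbors of two vertices. -/
noncomputable def commonFat (H : HoffmanGraph V) (x y : V) : ℕ :=
  {f : V | H.IsFat f ∧ H.graph.Adj x f ∧ H.graph.Adj y f}.ncard

lemma commonFat_comm (H : HoffmanGraph V) (x y : V) :
    H.commonFat x y = H.commonFat y x := by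
  unfold commonFat
  congr 1
  ext f
  simp only [Set.mem_setOf_eq]
  tauto

/-- A Hoffman graph is fat if every slim vertex has a fat neighbor. -/
def IsFatGraph (H : HoffmanGraph V) : Prop :=
  ∀ x, H.IsSlim x → ∃ f, H.IsFat f ∧ H.graph.Adj x f

/-- A representation of norm `m`. -/
def IsRep (H : HoffmanGraph V) (m : ℝ) {E : Type*} [NormedAddCommGroup E]
    [InnerProductSpace ℝ E] (φ : V → E) : Prop :=
  (∀ x, H.IsSlim x → ⟪φ x, φ x⟫ = m) ∧
  (∀ x, H.IsFat x → ⟪φ x, φ x⟫ = 1) ∧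
  (∀ x y, H.graph.Adj x y → ⟪φ x, φ y⟫ = 1) ∧
  (∀ x y, x ≠ y → ¬ H.graph.Adj x y → ⟪φ x, φ y⟫ = 0)

/-- A reduced representation of norm `m` (only the values on slim vertices matter). -/
def IsReducedRep (H : HoffmanGraph V) (m : ℝ) {E : Type*} [NormedAddCommGroup E]
    [InnerProductSpace ℝ E] (ψ : V → E) : Prop :=
  (∀ x, H.IsSlim x → ⟪ψ x, ψ x⟫ = m - H.fatDeg x) ∧
  (∀ x y, H.IsSlim x → H.IsSlim y → H.graph.Adj x y → ⟪ψ x, ψ y⟫ = 1 - H.commonFat x y) ∧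
  (∀ x y, H.IsSlim x → H.IsSlim y → x ≠ y → ¬ H.graph.Adj x y →
    ⟪ψ x, ψ y⟫ = - (H.commonFat x y : ℝ))

/-- The matrix B(𝔥) = A_s − C Cᵀ, indexed by the slim vertices. -/
noncomputable def matrixB (H : HoffmanGraph V) : Matrix H.Slim H.Slim ℝ :=
  fun x y => (if H.graph.Adj x.1 y.1 then (1 : ℝ) else 0) - (H.commonFat x.1 y.1 : ℝ)

/-- The smallest eigenvalue of a Hoffman graph. -/
noncomputable def lambdaMin (H : HoffmanGraph V) [Fintype V] : ℝ :=
  sInf (spectrum ℝ H.matrixB)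

/-- A subset of the vertices induces a Hoffman graph iff every fat vertex of it retains
a slim neighbor inside it. -/
def IsGoodSubset (H : HoffmanGraph V) (S : Set V) : Prop :=
  ∀ x ∈ S, H.IsFat x → ∃ y ∈ S, ¬ H.IsFat y ∧ H.graph.Adj x y

/-- The induced Hoffman subgraph on a good subset. -/
def induce (H : HoffmanGraph V) (S : Set V) (hS : H.IsGoodSubset S) : HoffmanGraph S where
  graph := H.graph.induce S
  IsFat := fun x => H.IsFat x.1
  fat_not_adj := by
    intro x y hx hy hadj
    exact H.fat_not_adj hx hy hadj
  fat_slim_nbr := by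
    rintro ⟨x, hxS⟩ hx
    obtain ⟨y, hyS, hy, hadj⟩ := hS x hxS hx
    exact ⟨⟨y, hyS⟩, hy, hadj⟩

/-- An (abstract) induced Hoffman subgraph relation between Hoffman graphs. -/
def IsInducedSubgraphOf {V₁ V₂ : Type*} (H₁ : HoffmanGraph V₁) (H₂ : HoffmanGraph V₂) : Prop :=
  ∃ e : V₁ ↪ V₂, (∀ x y, H₂.graph.Adj (e x) (e y) ↔ H₁.graph.Adj x y) ∧
    (∀ x, H₂.IsFat (e x) ↔ H₁.IsFat x)

/-- Isomorphism of Hoffman graphs. -/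
def IsIsoTo {V₁ V₂ : Type*} (H₁ : HoffmanGraph V₁) (H₂ : HoffmanGraph V₂) : Prop :=
  ∃ e : V₁ ≃ V₂, (∀ x y, H₂.graph.Adj (e x) (e y) ↔ H₁.graph.Adj x y) ∧
    (∀ x, H₂.IsFat (e x) ↔ H₁.IsFat x)

/-- `H` is the sum of its induced subgraphs on `W₁` and `W₂`. -/
structure IsSum (H : HoffmanGraph V) (W₁ W₂ : Set V) : Prop where
  nonempty₁ : W₁.Nonempty
  nonempty₂ : W₂.Nonempty
  good₁ : H.IsGoodSubset W₁
  good₂ : H.IsGoodSubset W₂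
  union_eq : W₁ ∪ W₂ = Set.univ
  slim_partition : ∀ v, H.IsSlim v → (v ∈ W₁ ↔ v ∉ W₂)
  fat_closed₁ : ∀ x ∈ W₁, H.IsSlim x → ∀ f, H.IsFat f → H.graph.Adj x f → f ∈ W₁
  fat_closed₂ : ∀ x ∈ W₂, H.IsSlim x → ∀ f, H.IsFat f → H.graph.Adj x f → f ∈ W₂
  common_le : ∀ x ∈ W₁, ∀ y ∈ W₂, H.IsSlim x → H.IsSlim y → H.commonFat x y ≤ 1
  common_iff : ∀ x ∈ W₁, ∀ y ∈ W₂, H.IsSlim x → H.IsSlim y →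
    (H.commonFat x y = 1 ↔ H.graph.Adj x y)

/-- `H` is decomposable if it is the sum of two nonempty induced Hoffman subgraphs. -/
def Decomposable (H : HoffmanGraph V) : Prop := ∃ W₁ W₂ : Set V, H.IsSum W₁ W₂

def Indecomposable (H : HoffmanGraph V) : Prop := ¬ H.Decomposable

/-- `H` is the sum of the family of its induced subgraphs on `W i`. -/
structure IsSumFamily (H : HoffmanGraph V) {n : ℕ} (W : Fin n → Set V) : Prop where
  nonempty : ∀ i, (W i).Nonempty
  good : ∀ i, H.IsGoodSubset (W i)
  union_eq : ⋃ i, W i = Set.univ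
  slim_mem_unique : ∀ v, H.IsSlim v → ∃! i, v ∈ W i
  fat_closed : ∀ i, ∀ x ∈ W i, H.IsSlim x → ∀ f, H.IsFat f → H.graph.Adj x f → f ∈ W i
  common_le : ∀ i j, i ≠ j → ∀ x ∈ W i, ∀ y ∈ W j, H.IsSlim x → H.IsSlim y →
    H.commonFat x y ≤ 1
  common_iff : ∀ i j, i ≠ j → ∀ x ∈ W i, ∀ y ∈ W j, H.IsSlim x → H.IsSlim y →
    (H.commonFat x y = 1 ↔ H.graph.Adj x y)

/-- Attach a new fat vertex (the `none` vertex) adjacent exactly to the slim vertices in `S`. -/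
def attachFat (H : HoffmanGraph V) (S : Set V) (hne : S.Nonempty)
    (hslim : ∀ v ∈ S, H.IsSlim v) : HoffmanGraph (Option V) where
  graph := {
    Adj := fun a b =>
      match a, b with
      | none, none => False
      | none, some v => v ∈ S
      | some v, none => v ∈ S
      | some u, some v => H.graph.Adj u v
    symm := by
      refine ⟨?_⟩
      rintro (_|u) (_|v) h
      · exact h.elim
      · exact h
      · exact h
      · exact h.symm
    loopless := by
      refine ⟨?_⟩
      rintro (_|u) h
      · exact h.elim
      · exact H.graph.loopless.irrefl u h }
  IsFat := fun a => match a with | none => True | some v => H.IsFat v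
  fat_not_adj := by
    rintro (_|u) (_|v) hu hv h
    · exact h.elim
    · exact (hslim v h) hv
    · exact (hslim u h) hu
    · exact H.fat_not_adj hu hv h
  fat_slim_nbr := by
    rintro (_|u) hu
    · obtain ⟨s, hs⟩ := hne
      exact ⟨some s, hslim s hs, hs⟩
    · obtain ⟨y, hy, hadj⟩ := H.fat_slim_nbr hu
      exact ⟨some y, hy, hadj⟩

/-- `H` is `μ`-saturated: it has smallest eigenvalue at least `μ` and no fat vertex can be
attached while keeping the smallest eigenvalue at least `μ`. -/
def IsSaturated (H : HoffmanGraph V) [Fintype V] (μ : ℝ) : Prop :=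
  μ ≤ H.lambdaMin ∧
  ∀ (S : Set V) (hne : S.Nonempty) (hslim : ∀ v ∈ S, H.IsSlim v),
    ¬ (μ ≤ (H.attachFat S hne hslim).lambdaMin)

/-- The special graph `S⁻(𝔥)`: slim vertices, adjacent when the inner product of their
reduced representations is negative. -/
noncomputable def specialMinus (H : HoffmanGraph V) : SimpleGraph H.Slim where
  Adj x y := x ≠ y ∧
    ((H.graph.Adj x.1 y.1 ∧ (1 : ℝ) - (H.commonFat x.1 y.1 : ℝ) < 0) ∨
     (¬ H.graph.Adj x.1 y.1 ∧ -(H.commonFat x.1 y.1 : ℝ) < 0))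
  symm := by
    refine ⟨?_⟩
    rintro x y ⟨hne, h⟩
    refine ⟨hne.symm, ?_⟩
    rw [H.commonFat_comm y.1 x.1]
    rcases h with ⟨ha, hl⟩ | ⟨ha, hl⟩
    · exact Or.inl ⟨ha.symm, hl⟩
    · exact Or.inr ⟨fun hadj => ha hadj.symm, hl⟩
  loopless := ⟨fun x h => h.1 rfl⟩

/-- The special graph `S⁺(𝔥)`: slim vertices, adjacent when the inner product of their
reduced representations is positive. -/
noncomputable def specialPlus (H : HoffmanGraph V) : SimpleGraph H.Slim where
  Adj x y := x ≠ y ∧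
    ((H.graph.Adj x.1 y.1 ∧ 0 < (1 : ℝ) - (H.commonFat x.1 y.1 : ℝ)) ∨
     (¬ H.graph.Adj x.1 y.1 ∧ 0 < -(H.commonFat x.1 y.1 : ℝ)))
  symm := by
    refine ⟨?_⟩
    rintro x y ⟨hne, h⟩
    refine ⟨hne.symm, ?_⟩
    rw [H.commonFat_comm y.1 x.1]
    rcases h with ⟨ha, hl⟩ | ⟨ha, hl⟩
    · exact Or.inl ⟨ha.symm, hl⟩
    · exact Or.inr ⟨fun hadj => ha hadj.symm, hl⟩
  loopless := ⟨fun x h => h.1 rfl⟩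

/-- The special graph `S(𝔥)`, the union of `S⁻(𝔥)` and `S⁺(𝔥)`. -/
noncomputable def special (H : HoffmanGraph V) : SimpleGraph H.Slim :=
  H.specialMinus ⊔ H.specialPlus

/-- `⟨S⟩_𝔥`: the set `S` together with all fat neighbors of its members. -/
def closureSet (H : HoffmanGraph V) (S : Set V) : Set V :=
  S ∪ {f | H.IsFat f ∧ ∃ x ∈ S, H.graph.Adj x f}

/-- The Hoffman graph `𝔥^(t)` with one slim vertex (`none`) and `t` fat vertices. -/
def manyFat (t : ℕ) : HoffmanGraph (Option (Fin t)) where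
  graph := {
    Adj := fun a b => (a = none ∧ b ≠ none) ∨ (a ≠ none ∧ b = none)
    symm := by
      refine ⟨?_⟩
      rintro a b (⟨h1, h2⟩ | ⟨h1, h2⟩)
      · exact Or.inr ⟨h2, h1⟩
      · exact Or.inl ⟨h2, h1⟩
    loopless := by
      refine ⟨?_⟩
      rintro a (⟨h1, h2⟩ | ⟨h1, h2⟩)
      · exact h2 h1
      · exact h1 h2 }
  IsFat := fun a => a ≠ none
  fat_not_adj := by
    rintro a b ha hb (⟨h1, _⟩ | ⟨_, h1⟩)
    · exact ha h1
    · exact hb h1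
  fat_slim_nbr := by
    intro a ha
    refine ⟨none, by simp, Or.inr ⟨ha, rfl⟩⟩

/-- An ordinary (slim) graph regarded as a Hoffman graph. -/
def ofSimple {W : Type*} (G : SimpleGraph W) : HoffmanGraph W where
  graph := G
  IsFat := fun _ => False
  fat_not_adj := by intro x y hx _ _; exact hx
  fat_slim_nbr := by intro x hx; exact hx.elim

end HoffmanGraph
namespace HoffmanGraph

variable {V : Type*}

/-- The Hoffman graph obtained by replacing the fat vertices `f i` by slim cliques of
sizes `n i`, joining all neighbors of `f i` to all vertices of the `i`-th clique. -/
def blowup {k : ℕ} (H : HoffmanGraph V) (f : Fin k → V) (hf : ∀ i, H.IsFat (f i))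
    (n : Fin k → ℕ) :
    HoffmanGraph ({v : V // v ∉ Set.range f} ⊕ (Σ i : Fin k, Fin (n i))) where
  graph := {
    Adj := fun a b =>
      match a, b with
      | .inl u, .inl v => H.graph.Adj u.1 v.1
      | .inl u, .inr x => H.graph.Adj u.1 (f x.1)
      | .inr x, .inl v => H.graph.Adj (f x.1) v.1
      | .inr x, .inr y => x ≠ y ∧ x.1 = y.1
    symm := by
      refine ⟨?_⟩
      rintro (u|x) (v|y) h
      · exact h.symm
      · exact h.symm
      · exact h.symm
      · exact ⟨h.1.symm, h.2.symm⟩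
    loopless := by
      refine ⟨?_⟩
      rintro (u|x) h
      · exact H.graph.loopless.irrefl _ h
      · exact h.1 rfl }
  IsFat := fun a => match a with | .inl u => H.IsFat u.1 | .inr _ => False
  fat_not_adj := by
    rintro (u|x) (v|y) hu hv h
    · exact H.fat_not_adj hu hv h
    · exact hv
    · exact hu
    · exact hu
  fat_slim_nbr := by
    rintro (u|x) hu
    · obtain ⟨y, hy, hadj⟩ := H.fat_slim_nbr hu
      refine ⟨Sum.inl ⟨y, ?_⟩, hy, hadj⟩
      rintro ⟨i, rfl⟩
      exact hy (hf i)
    · exact hu.elim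

/-- The slim graph obtained by replacing every fat vertex by a slim `n`-clique,
joining all neighbors of a fat vertex to all vertices of its clique. -/
def blowupAll (H : HoffmanGraph V) (n : ℕ) :
    HoffmanGraph (H.Slim ⊕ ({f : V // H.IsFat f} × Fin n)) where
  graph := {
    Adj := fun a b =>
      match a, b with
      | .inl u, .inl v => H.graph.Adj u.1 v.1
      | .inl u, .inr x => H.graph.Adj u.1 x.1.1
      | .inr x, .inl v => H.graph.Adj x.1.1 v.1
      | .inr x, .inr y => x ≠ y ∧ x.1 = y.1
    symm := by
      refine ⟨?_⟩
      rintro (u|x) (v|y) h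
      · exact h.symm
      · exact h.symm
      · exact h.symm
      · exact ⟨h.1.symm, h.2.symm⟩
    loopless := by
      refine ⟨?_⟩
      rintro (u|x) h
      · exact H.graph.loopless.irrefl _ h
      · exact h.1 rfl }
  IsFat := fun _ => False
  fat_not_adj := by intro x y hx _; exact hx.elim
  fat_slim_nbr := by intro x hx; exact hx.elim

/-- The Hoffman graph of Example 4.2: slim vertices `ℤ/4ℤ` (the `inl`'s), fat vertices
`f_j` for `j ∈ ℤ/4ℤ` (the `inr`'s), with edges `{0,2}`, `{1,3}` and `{i, f_j}` for
`i = j` or `i = j + 1`. -/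
def exampleA3tilde : HoffmanGraph (ZMod 4 ⊕ ZMod 4) where
  graph := {
    Adj := fun a b =>
      match a, b with
      | .inl i, .inl j => j = i + 2
      | .inl i, .inr j => i = j ∨ i = j + 1
      | .inr j, .inl i => i = j ∨ i = j + 1
      | .inr _, .inr _ => False
    symm := by
      have h4 : (2 : ZMod 4) + 2 = 0 := by decide
      refine ⟨?_⟩
      rintro (i|i) (j|j) h
      · have h' : j = i + 2 := h
        subst h'
        show i = i + 2 + 2
        rw [add_assoc, h4, add_zero]
      · exact h
      · exact h
      · exact h.elim
    loopless := by
      refine ⟨?_⟩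
      rintro (i|i) h
      · exact absurd (left_eq_add.mp h) (by decide)
      · exact h }
  IsFat := fun a => match a with | .inl _ => False | .inr _ => True
  fat_not_adj := by
    rintro (i|i) (j|j) hx hy h
    · exact hx
    · exact hx
    · exact hy
    · exact h
  fat_slim_nbr := by
    rintro (i|i) hx
    · exact hx.elim
    · exact ⟨Sum.inl i, id, Or.inl rfl⟩

end HoffmanGraph

/-- The extended Dynkin graph `D̃₄`, i.e. the star `K_{1,4}`. -/
def tildeD4Graph : SimpleGraph (Fin 5) := SimpleGraph.fromRel (fun a _ => a = 0)

/-- The Dynkin graph `A_m`: the path on `m` vertices. -/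
def dynkinA (m : ℕ) : SimpleGraph (Fin m) :=
  SimpleGraph.fromRel (fun i j => i.1 + 1 = j.1)

/-- The extended Dynkin graph `Ã_m`: the cycle on `m + 1` vertices. -/
def tildeA (m : ℕ) : SimpleGraph (ZMod (m + 1)) :=
  SimpleGraph.fromRel (fun i j => i + 1 = j)

/-- The Dynkin graph `D_m`: the path `1 - 2 - ⋯ - (m-1)` with the extra vertex `0`
attached to the vertex `2`. -/
def dynkinD (m : ℕ) : SimpleGraph (Fin m) :=
  SimpleGraph.fromRel (fun i j => (1 ≤ i.1 ∧ i.1 + 1 = j.1) ∨ (i.1 = 0 ∧ j.1 = 2))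

/-- The extended Dynkin graph `D̃_m` on `m + 1` vertices: the path `1 - 2 - ⋯ - (m-1)`
with the extra vertex `0` attached to `2` and the extra vertex `m` attached to `m - 2`. -/
def tildeD (m : ℕ) : SimpleGraph (Fin (m + 1)) :=
  SimpleGraph.fromRel (fun i j =>
    (1 ≤ i.1 ∧ i.1 + 1 = j.1 ∧ j.1 ≤ m - 1) ∨ (i.1 = 0 ∧ j.1 = 2) ∨ (i.1 = m ∧ j.1 = m - 2))
namespace HLT
open Matrix

noncomputable def ind (p : Prop) : ℝ := if p then 1 else 0

lemma ind_nonneg (p : Prop) : 0 ≤ ind p := by unfold ind; split <;> norm_num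

lemma ind_congr {p q : Prop} (h : p ↔ q) : ind p = ind q := by rw [ind, ind, if_congr h rfl rfl]

lemma ind_mul (p : Prop) (m : ℝ) : ind p * m = if p then m else 0 := by
  unfold ind; split <;> simp

lemma ind_true {p : Prop} (h : p) : ind p = 1 := by simp [ind, h]
lemma ind_false {p : Prop} (h : ¬ p) : ind p = 0 := by simp [ind, h]

section Sym
variable {m : Type} [Fintype m] [DecidableEq m] {A : Matrix m m ℝ}

lemma sInf_spectrum_empty [IsEmpty m] : sInf (spectrum ℝ A) = 0 := by
  haveI : Subsingleton (Matrix m m ℝ) := ⟨fun B C => by ext i j; exact isEmptyElim i⟩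
  have h : spectrum ℝ A = ∅ := by
    ext t; simp [spectrum.mem_iff, isUnit_of_subsingleton]
  rw [h, Real.sInf_empty]

lemma exists_min_vec (hA : A.IsHermitian) [Nonempty m] :
    ∃ x : m → ℝ, x ⬝ᵥ x = 1 ∧ x ⬝ᵥ A *ᵥ x = sInf (spectrum ℝ A) := by
  have hspec := hA.spectrum_real_eq_range_eigenvalues
  have hfin : (spectrum ℝ A).Finite := A.finite_real_spectrum
  have hne : (spectrum ℝ A).Nonempty := by rw [hspec]; exact Set.range_nonempty _
  have hmem : sInf (spectrum ℝ A) ∈ spectrum ℝ A := hne.csInf_mem hfin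
  rw [hspec] at hmem; obtain ⟨i, hi⟩ := hmem
  have h1 := (hA.eigenvectorBasis).orthonormal.1 i
  have h2 : (hA.eigenvectorBasis i : m → ℝ) ⬝ᵥ (hA.eigenvectorBasis i : m → ℝ)
      = @inner ℝ _ _ (hA.eigenvectorBasis i) (hA.eigenvectorBasis i) := by
    rw [PiLp.inner_apply]; rfl
  have e1 : (hA.eigenvectorBasis i : m → ℝ) ⬝ᵥ (hA.eigenvectorBasis i : m → ℝ) = 1 := by
    rw [h2, real_inner_self_eq_norm_sq, h1]; norm_num
  have e2 : (hA.eigenvectorBasis i : m → ℝ) ⬝ᵥ (A *ᵥ (hA.eigenvectorBasis i : m → ℝ))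
      = sInf (spectrum ℝ A) := by
    rw [show (A *ᵥ (hA.eigenvectorBasis i : m → ℝ))
        = hA.eigenvalues i • (hA.eigenvectorBasis i : m → ℝ) from hA.mulVec_eigenvectorBasis i,
      dotProduct_smul, smul_eq_mul, e1, mul_one, hspec]
    exact hi
  exact ⟨_, e1, e2⟩

lemma rayleigh (hA : A.IsHermitian) (x : m → ℝ) :
    sInf (spectrum ℝ A) * (x ⬝ᵥ x) ≤ x ⬝ᵥ A *ᵥ x := by
  rcases isEmpty_or_nonempty m with hm | hm
  · simp [dotProduct]
  have hbd : BddBelow (spectrum ℝ A) := (Matrix.finite_real_spectrum (A := A)).bddBelow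
  have hle : ∀ i, sInf (spectrum ℝ A) ≤ hA.eigenvalues i :=
    fun i => csInf_le hbd (hA.eigenvalues_mem_spectrum_real i)
  set U : Matrix m m ℝ := (hA.eigenvectorUnitary : Matrix m m ℝ) with hU
  set v : m → ℝ := star U *ᵥ x with hv
  have hsU : star U = Uᵀ := Matrix.conjTranspose_eq_transpose_of_trivial U
  have hvm : x ᵥ* U = v := by rw [hv, hsU, Matrix.mulVec_transpose]
  have h1 : x ⬝ᵥ A *ᵥ x = ∑ i, hA.eigenvalues i * (v i)^2 := by
    conv_lhs => rw [hA.spectral_theorem, Unitary.conjStarAlgAut_apply]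
    rw [← Matrix.mulVec_mulVec, ← Matrix.mulVec_mulVec, Matrix.dotProduct_mulVec x U, hvm, ← hv]
    simp only [dotProduct, Matrix.mulVec_diagonal, Function.comp_apply, RCLike.ofReal_real_eq_id,
      id_eq]
    exact Finset.sum_congr rfl fun i _ => by ring
  have h2 : x ⬝ᵥ x = ∑ i, (v i)^2 := by
    have h3 : v ⬝ᵥ v = x ⬝ᵥ x := by
      rw [Matrix.dotProduct_mulVec v (star U) x, hsU, Matrix.vecMul_transpose, hv,
        Matrix.mulVec_mulVec, (Matrix.mem_unitaryGroup_iff).mp hA.eigenvectorUnitary.2,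
        Matrix.one_mulVec]
    rw [← h3]
    simp only [dotProduct]
    exact Finset.sum_congr rfl fun i _ => by ring
  rw [h1, h2, Finset.mul_sum]
  exact Finset.sum_le_sum fun i _ => mul_le_mul_of_nonneg_right (hle i) (sq_nonneg _)

lemma le_sInf_spectrum (hA : A.IsHermitian) [Nonempty m] (t : ℝ)
    (h : ∀ z : m → ℝ, t * (z ⬝ᵥ z) ≤ z ⬝ᵥ A *ᵥ z) : t ≤ sInf (spectrum ℝ A) := by
  obtain ⟨x, hx1, hx2⟩ := exists_min_vec hA
  have := h x
  rwa [hx1, hx2, mul_one] at this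

lemma sInf_le_of_unit (hA : A.IsHermitian) (z : m → ℝ) (hz : z ⬝ᵥ z = 1) :
    sInf (spectrum ℝ A) ≤ z ⬝ᵥ A *ᵥ z := by
  have := rayleigh hA z
  rwa [hz, mul_one] at this
end Sym
end HLT

namespace HLT
open Matrix
variable {V : Type} [Fintype V]

lemma commonFat_cast (H : HoffmanGraph V) (a b : V) :
    (H.commonFat a b : ℝ)
      = ∑ g : V, ind (H.IsFat g) * (ind (H.graph.Adj a g) * ind (H.graph.Adj b g)) := by
  have h1 : {f : V | H.IsFat f ∧ H.graph.Adj a f ∧ H.graph.Adj b f}.ncard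
      = (Finset.univ.filter fun g : V =>
          H.IsFat g ∧ H.graph.Adj a g ∧ H.graph.Adj b g).card := by
    rw [Set.ncard_eq_toFinset_card']
    congr 1
    ext g
    simp
  rw [HoffmanGraph.commonFat, h1, Finset.card_filter]
  push_cast
  refine Finset.sum_congr rfl fun g _ => ?_
  by_cases h1 : H.IsFat g <;> by_cases h2 : H.graph.Adj a g <;> by_cases h3 : H.graph.Adj b g <;>
    simp [ind, h1, h2, h3]

noncomputable def QA (H : HoffmanGraph V) (z : H.Slim → ℝ) : ℝ :=
  ∑ u : H.Slim, ∑ v : H.Slim, ind (H.graph.Adj u.1 v.1) * (z u * z v)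

noncomputable def cS (H : HoffmanGraph V) (z : H.Slim → ℝ) (g : V) : ℝ :=
  ∑ u : H.Slim, ind (H.graph.Adj u.1 g) * z u

noncomputable def QF (H : HoffmanGraph V) (z : H.Slim → ℝ) : ℝ :=
  ∑ g : V, ind (H.IsFat g) * (cS H z g * cS H z g)

lemma matrixB_entry (H : HoffmanGraph V) (u v : H.Slim) :
    H.matrixB u v = ind (H.graph.Adj u.1 v.1)
      - ∑ g : V, ind (H.IsFat g) * (ind (H.graph.Adj u.1 g) * ind (H.graph.Adj v.1 g)) := by
  rw [show H.matrixB u v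
      = (if H.graph.Adj u.1 v.1 then (1:ℝ) else 0) - (H.commonFat u.1 v.1 : ℝ) from rfl,
    commonFat_cast]
  rfl

lemma qform (H : HoffmanGraph V) (z : H.Slim → ℝ) :
    z ⬝ᵥ H.matrixB *ᵥ z = QA H z - QF H z := by
  have hpt : ∀ u v : H.Slim, z u * (H.matrixB u v * z v)
      = ind (H.graph.Adj u.1 v.1) * (z u * z v)
        - ∑ g : V, ind (H.IsFat g)
            * ((ind (H.graph.Adj u.1 g) * z u) * (ind (H.graph.Adj v.1 g) * z v)) := by
    intro u v
    rw [matrixB_entry, sub_mul, mul_sub]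
    congr 1
    · ring
    · rw [Finset.sum_mul, Finset.mul_sum]
      exact Finset.sum_congr rfl fun g _ => by ring
  have hQF : QF H z = ∑ u : H.Slim, ∑ v : H.Slim, ∑ g : V, ind (H.IsFat g)
      * ((ind (H.graph.Adj u.1 g) * z u) * (ind (H.graph.Adj v.1 g) * z v)) := by
    rw [QF]
    have : ∀ g : V, ind (H.IsFat g) * (cS H z g * cS H z g)
        = ∑ u : H.Slim, ∑ v : H.Slim, ind (H.IsFat g)
            * ((ind (H.graph.Adj u.1 g) * z u) * (ind (H.graph.Adj v.1 g) * z v)) := by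
      intro g
      rw [cS, Finset.sum_mul_sum, Finset.mul_sum]
      exact Finset.sum_congr rfl fun u _ => by
        rw [Finset.mul_sum]
    rw [Finset.sum_congr rfl fun g _ => this g]
    rw [Finset.sum_comm]
    exact Finset.sum_congr rfl fun u _ => Finset.sum_comm
  calc z ⬝ᵥ H.matrixB *ᵥ z
      = ∑ u : H.Slim, ∑ v : H.Slim, z u * (H.matrixB u v * z v) := by
        simp only [dotProduct, mulVec, Finset.mul_sum]
    _ = ∑ u : H.Slim, ∑ v : H.Slim, (ind (H.graph.Adj u.1 v.1) * (z u * z v)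
          - ∑ g : V, ind (H.IsFat g)
              * ((ind (H.graph.Adj u.1 g) * z u) * (ind (H.graph.Adj v.1 g) * z v))) :=
        Finset.sum_congr rfl fun u _ => Finset.sum_congr rfl fun v _ => hpt u v
    _ = QA H z - QF H z := by
        rw [hQF, QA, ← Finset.sum_sub_distrib]
        exact Finset.sum_congr rfl fun u _ => by rw [← Finset.sum_sub_distrib]

lemma matrixB_herm (H : HoffmanGraph V) : (H.matrixB).IsHermitian := by
  ext u v
  simp only [Matrix.conjTranspose_apply, star_trivial]
  show H.matrixB v u = H.matrixB u v
  rw [matrixB_entry, matrixB_entry, SimpleGraph.adj_comm]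
  congr 1
  refine Finset.sum_congr rfl fun g _ => by ring

lemma lambdaMin_le_neg_one (H : HoffmanGraph V) {g : V} (hg : H.IsFat g) :
    H.lambdaMin ≤ -1 := by
  obtain ⟨y₀, hy₀, hadj⟩ := H.fat_slim_nbr hg
  set s : H.Slim := ⟨y₀, hy₀⟩ with hs
  have h1 : (Pi.single s (1:ℝ)) ⬝ᵥ (Pi.single s (1:ℝ)) = 1 := by
    rw [dotProduct_single]
    simp
  have h2 : (Pi.single s (1:ℝ)) ⬝ᵥ H.matrixB *ᵥ (Pi.single s (1:ℝ)) = H.matrixB s s := by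
    rw [Matrix.mulVec_single]
    rw [single_dotProduct]
    simp
  have h3 := sInf_le_of_unit (matrixB_herm H) _ h1
  rw [h2] at h3
  show sInf (spectrum ℝ H.matrixB) ≤ -1
  refine le_trans h3 ?_
  have h4 : H.matrixB s s = -(H.commonFat y₀ y₀ : ℝ) := by
    rw [show H.matrixB s s
        = (if H.graph.Adj y₀ y₀ then (1:ℝ) else 0) - (H.commonFat y₀ y₀ : ℝ) from rfl]
    simp [SimpleGraph.irrefl]
  rw [h4]
  have h5 : 0 < H.commonFat y₀ y₀ := by
    rw [HoffmanGraph.commonFat, Set.ncard_pos (Set.toFinite _)]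
    exact ⟨g, hg, hadj.symm, hadj.symm⟩
  have h6 : (1 : ℝ) ≤ (H.commonFat y₀ y₀ : ℝ) := by exact_mod_cast h5
  linarith

end HLT

namespace HLT
open Matrix
variable {V : Type} [Fintype V] (H : HoffmanGraph V) {k : ℕ} (f : Fin k → V)
  (hf : ∀ i, H.IsFat (f i)) (n : Fin k → ℕ)


lemma sum_ind_eq {α : Type*} [Fintype α] (i : α) (g : α → ℝ) :
    (∑ j, ind (i = j) * g j) = g i := by
  rw [Finset.sum_eq_single_of_mem i (Finset.mem_univ i)]
  · rw [ind_true rfl, one_mul]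
  · intro b _ hb
    rw [ind_false (fun h => hb h.symm), zero_mul]

lemma lambdaMin_eq : H.lambdaMin = sInf (spectrum ℝ H.matrixB) := rfl

def toL (s : H.Slim) : (H.blowup f hf n).Slim :=
  ⟨.inl ⟨s.1, fun hm => by obtain ⟨i, hi⟩ := hm; exact s.2 (hi ▸ hf i)⟩, s.2⟩

def toR (q : Σ i : Fin k, Fin (n i)) : (H.blowup f hf n).Slim := ⟨.inr q, fun h => h⟩

def eqv : (H.Slim ⊕ (Σ i : Fin k, Fin (n i))) ≃ (H.blowup f hf n).Slim where
  toFun := Sum.elim (toL H f hf n) (toR H f hf n)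
  invFun p := match p with
    | ⟨.inl u, h⟩ => .inl ⟨u.1, h⟩
    | ⟨.inr q, _⟩ => .inr q
  left_inv := by rintro (s | q) <;> rfl
  right_inv := by rintro ⟨(u | q), h⟩ <;> rfl

lemma sum_slim_split (F : (H.blowup f hf n).Slim → ℝ) :
    ∑ p, F p = (∑ s : H.Slim, F (toL H f hf n s))
      + ∑ q : Σ i : Fin k, Fin (n i), F (toR H f hf n q) := by
  rw [← Equiv.sum_comp (eqv H f hf n) F, Fintype.sum_sum_type]
  simp only [eqv, Equiv.coe_fn_mk, Sum.elim_inl, Sum.elim_inr]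

lemma sum_sigma_split (F : (Σ i : Fin k, Fin (n i)) → ℝ) :
    ∑ q : Σ i : Fin k, Fin (n i), F q = ∑ i : Fin k, ∑ a : Fin (n i), F ⟨i, a⟩ := by
  rw [← Finset.univ_sigma_univ, Finset.sum_sigma]

lemma ind_adj_ll (s t : H.Slim) :
    ind ((H.blowup f hf n).graph.Adj (toL H f hf n s).1 (toL H f hf n t).1)
      = ind (H.graph.Adj s.1 t.1) := rfl

lemma ind_adj_lr (s : H.Slim) (i : Fin k) (a : Fin (n i)) :
    ind ((H.blowup f hf n).graph.Adj (toL H f hf n s).1 (toR H f hf n ⟨i, a⟩).1)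
      = ind (H.graph.Adj s.1 (f i)) := rfl

lemma ind_adj_rl (i : Fin k) (a : Fin (n i)) (s : H.Slim) :
    ind ((H.blowup f hf n).graph.Adj (toR H f hf n ⟨i, a⟩).1 (toL H f hf n s).1)
      = ind (H.graph.Adj (f i) s.1) := rfl

lemma ind_adj_rr (q r : Σ i : Fin k, Fin (n i)) :
    ind ((H.blowup f hf n).graph.Adj (toR H f hf n q).1 (toR H f hf n r).1)
      = ind (q ≠ r ∧ q.1 = r.1) := rfl

lemma ind_adj_rr' (i : Fin k) (a : Fin (n i)) (j : Fin k) (b : Fin (n j)) :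
    ind ((⟨i, a⟩ : Σ i : Fin k, Fin (n i)).1 = (⟨j, b⟩ : Σ i : Fin k, Fin (n i)).1)
      = ind (i = j) := rfl

lemma ind_adj_lW (s : H.Slim) (u : {v : V // v ∉ Set.range f}) :
    ind ((H.blowup f hf n).graph.Adj (toL H f hf n s).1 (Sum.inl u))
      = ind (H.graph.Adj s.1 u.1) := rfl

lemma ind_adj_rW (q : Σ i : Fin k, Fin (n i)) (u : {v : V // v ∉ Set.range f}) :
    ind ((H.blowup f hf n).graph.Adj (toR H f hf n q).1 (Sum.inl u))
      = ind (H.graph.Adj (f q.1) u.1) := rfl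

lemma ind_fat_l (u : {v : V // v ∉ Set.range f}) :
    ind ((H.blowup f hf n).IsFat (Sum.inl u)) = ind (H.IsFat u.1) := rfl

lemma ind_fat_r (q : Σ i : Fin k, Fin (n i)) :
    ind ((H.blowup f hf n).IsFat (Sum.inr q)) = 0 := ind_false (fun h => h)

lemma ind_ne_and (q r : Σ i : Fin k, Fin (n i)) :
    ind (q ≠ r ∧ q.1 = r.1) = ind (q.1 = r.1) - ind (q = r) := by
  by_cases h : q = r
  · subst h
    rw [ind_true rfl, ind_true rfl]
    simp [ind]
  · rw [ind_false h, ind_congr (show (q ≠ r ∧ q.1 = r.1) ↔ (q.1 = r.1) from by tauto)]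
    ring

variable (z : (H.blowup f hf n).Slim → ℝ) (x : H.Slim → ℝ) (y : ∀ i, Fin (n i) → ℝ)

lemma norm_split (hx : ∀ s, x s = z (toL H f hf n s))
    (hy : ∀ i a, y i a = z (toR H f hf n ⟨i, a⟩)) :
    z ⬝ᵥ z = x ⬝ᵥ x + ∑ i, ∑ a, (y i a)^2 := by
  calc z ⬝ᵥ z = ∑ p : (H.blowup f hf n).Slim, z p * z p := rfl
    _ = (∑ s : H.Slim, z (toL H f hf n s) * z (toL H f hf n s))
        + ∑ q : Σ i : Fin k, Fin (n i), z (toR H f hf n q) * z (toR H f hf n q) :=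
        sum_slim_split H f hf n _
    _ = x ⬝ᵥ x + ∑ i, ∑ a, (y i a)^2 := by
        congr 1
        · exact Finset.sum_congr rfl fun s _ => by rw [← hx]
        · rw [sum_sigma_split]
          exact Finset.sum_congr rfl fun i _ =>
            Finset.sum_congr rfl fun a _ => by rw [← hy]; ring

lemma block_ll (hx : ∀ s, x s = z (toL H f hf n s)) :
    (∑ s : H.Slim, ∑ t : H.Slim,
        ind ((H.blowup f hf n).graph.Adj (toL H f hf n s).1 (toL H f hf n t).1)
          * (z (toL H f hf n s) * z (toL H f hf n t)))
      = QA H x :=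
  Finset.sum_congr rfl fun s _ => Finset.sum_congr rfl fun t _ => by
    rw [ind_adj_ll, ← hx, ← hx]

lemma block_lr (hx : ∀ s, x s = z (toL H f hf n s))
    (hy : ∀ i a, y i a = z (toR H f hf n ⟨i, a⟩)) :
    (∑ s : H.Slim, ∑ q : Σ i : Fin k, Fin (n i),
        ind ((H.blowup f hf n).graph.Adj (toL H f hf n s).1 (toR H f hf n q).1)
          * (z (toL H f hf n s) * z (toR H f hf n q)))
      = ∑ i, cS H x (f i) * (∑ a, y i a) := by
  have h1 : ∀ s : H.Slim, (∑ q : Σ i : Fin k, Fin (n i),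
      ind ((H.blowup f hf n).graph.Adj (toL H f hf n s).1 (toR H f hf n q).1)
        * (z (toL H f hf n s) * z (toR H f hf n q)))
      = ∑ i, ∑ a, ind (H.graph.Adj s.1 (f i)) * (x s * y i a) := by
    intro s
    rw [sum_sigma_split]
    exact Finset.sum_congr rfl fun i _ => Finset.sum_congr rfl fun a _ => by
      rw [ind_adj_lr, ← hx, ← hy]
  rw [Finset.sum_congr rfl fun s _ => h1 s, Finset.sum_comm]
  refine Finset.sum_congr rfl fun i _ => ?_
  rw [cS, Fintype.sum_mul_sum]
  exact Finset.sum_congr rfl fun s _ => Finset.sum_congr rfl fun a _ => by ring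

lemma block_rl (hx : ∀ s, x s = z (toL H f hf n s))
    (hy : ∀ i a, y i a = z (toR H f hf n ⟨i, a⟩)) :
    (∑ q : Σ i : Fin k, Fin (n i), ∑ t : H.Slim,
        ind ((H.blowup f hf n).graph.Adj (toR H f hf n q).1 (toL H f hf n t).1)
          * (z (toR H f hf n q) * z (toL H f hf n t)))
      = ∑ i, cS H x (f i) * (∑ a, y i a) := by
  rw [sum_sigma_split]
  refine Finset.sum_congr rfl fun i _ => ?_
  have h1 : ∀ (a : Fin (n i)) (t : H.Slim),
      ind ((H.blowup f hf n).graph.Adj (toR H f hf n ⟨i, a⟩).1 (toL H f hf n t).1)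
        * (z (toR H f hf n ⟨i, a⟩) * z (toL H f hf n t))
      = ind (H.graph.Adj t.1 (f i)) * x t * y i a := by
    intro a t
    rw [ind_adj_rl, ← hx, ← hy, ind_congr (H.graph.adj_comm (f i) t.1)]
    ring
  rw [Finset.sum_congr rfl fun a _ => Finset.sum_congr rfl fun t _ => h1 a t]
  rw [Finset.sum_comm, cS, Finset.sum_mul]
  refine Finset.sum_congr rfl fun t _ => ?_
  rw [Finset.mul_sum]

lemma block_rr (hy : ∀ i a, y i a = z (toR H f hf n ⟨i, a⟩)) :
    (∑ q : Σ i : Fin k, Fin (n i), ∑ r : Σ i : Fin k, Fin (n i),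
        ind ((H.blowup f hf n).graph.Adj (toR H f hf n q).1 (toR H f hf n r).1)
          * (z (toR H f hf n q) * z (toR H f hf n r)))
      = (∑ i, (∑ a, y i a) * (∑ a, y i a)) - ∑ i, ∑ a, (y i a)^2 := by
  have h0 : ∀ q r : Σ i : Fin k, Fin (n i),
      ind ((H.blowup f hf n).graph.Adj (toR H f hf n q).1 (toR H f hf n r).1)
        * (z (toR H f hf n q) * z (toR H f hf n r))
      = ind (q.1 = r.1) * (z (toR H f hf n q) * z (toR H f hf n r))
        - ind (q = r) * (z (toR H f hf n q) * z (toR H f hf n r)) := by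
    intro q r
    rw [ind_adj_rr, ind_ne_and]
    ring
  rw [Finset.sum_congr rfl fun q _ => Finset.sum_congr rfl fun r _ => h0 q r]
  rw [Finset.sum_congr rfl fun q (_ : q ∈ Finset.univ) => Finset.sum_sub_distrib _ _,
    Finset.sum_sub_distrib]
  congr 1
  · -- first part
    have h1 : ∀ q : Σ i : Fin k, Fin (n i),
        (∑ r : Σ i : Fin k, Fin (n i),
          ind (q.1 = r.1) * (z (toR H f hf n q) * z (toR H f hf n r)))
        = ∑ j, ind (q.1 = j) * (z (toR H f hf n q) * ∑ b, z (toR H f hf n ⟨j, b⟩)) := by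
      intro q
      rw [sum_sigma_split]
      refine Finset.sum_congr rfl fun j _ => ?_
      rw [Finset.mul_sum, Finset.mul_sum]
    rw [Finset.sum_congr rfl fun q _ => h1 q, sum_sigma_split]
    refine Finset.sum_congr rfl fun i _ => ?_
    have h2 : ∀ a : Fin (n i),
        (∑ j, ind ((⟨i, a⟩ : Σ i : Fin k, Fin (n i)).1 = j)
          * (z (toR H f hf n ⟨i, a⟩) * ∑ b, z (toR H f hf n ⟨j, b⟩)))
        = z (toR H f hf n ⟨i, a⟩) * ∑ b, z (toR H f hf n ⟨i, b⟩) := by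
      intro a
      exact sum_ind_eq i _
    rw [Finset.sum_congr rfl fun a _ => h2 a, ← Finset.sum_mul]
    rw [Finset.sum_congr rfl fun a (_ : a ∈ Finset.univ) => (hy i a).symm]
  · -- diagonal part
    have h1 : ∀ q : Σ i : Fin k, Fin (n i),
        (∑ r : Σ i : Fin k, Fin (n i),
          ind (q = r) * (z (toR H f hf n q) * z (toR H f hf n r)))
        = z (toR H f hf n q) * z (toR H f hf n q) := by
      intro q
      exact sum_ind_eq q _
    rw [Finset.sum_congr rfl fun q _ => h1 q, sum_sigma_split]
    exact Finset.sum_congr rfl fun i _ => Finset.sum_congr rfl fun a _ => by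
      rw [← hy]; ring

lemma QA_blowup (hx : ∀ s, x s = z (toL H f hf n s))
    (hy : ∀ i a, y i a = z (toR H f hf n ⟨i, a⟩)) :
    QA (H.blowup f hf n) z = QA H x
      + ((∑ i, cS H x (f i) * (∑ a, y i a)) + (∑ i, cS H x (f i) * (∑ a, y i a))
        + ((∑ i, (∑ a, y i a) * (∑ a, y i a)) - ∑ i, ∑ a, (y i a)^2)) := by
  rw [QA, sum_slim_split H f hf n]
  rw [Finset.sum_congr rfl fun s (_ : s ∈ Finset.univ) => sum_slim_split H f hf n
    (fun p => ind ((H.blowup f hf n).graph.Adj (toL H f hf n s).1 p.1)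
      * (z (toL H f hf n s) * z p))]
  rw [Finset.sum_congr rfl fun q (_ : q ∈ Finset.univ) => sum_slim_split H f hf n
    (fun p => ind ((H.blowup f hf n).graph.Adj (toR H f hf n q).1 p.1)
      * (z (toR H f hf n q) * z p))]
  rw [Finset.sum_add_distrib, Finset.sum_add_distrib]
  rw [block_ll H f hf n z x hx, block_lr H f hf n z x y hx hy,
    block_rl H f hf n z x y hx hy, block_rr H f hf n z y hy]
  ring

lemma QF_blowup (hinj : Function.Injective f)
    (hx : ∀ s, x s = z (toL H f hf n s)) :
    QF (H.blowup f hf n) z = QF H x - ∑ i, cS H x (f i) * cS H x (f i) := by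
  have hGF : QF (H.blowup f hf n) z
      = ∑ u : {v : V // v ∉ Set.range f}, ind (H.IsFat u.1) * (cS H x u.1 * cS H x u.1) := by
    rw [QF, Fintype.sum_sum_type]
    have h2 : ∀ q : Σ i : Fin k, Fin (n i),
        ind ((H.blowup f hf n).IsFat (Sum.inr q))
          * (cS (H.blowup f hf n) z (Sum.inr q) * cS (H.blowup f hf n) z (Sum.inr q)) = 0 := by
      intro q
      rw [ind_fat_r]
      ring
    rw [Finset.sum_congr rfl fun q _ => h2 q, Finset.sum_const_zero, add_zero]
    refine Finset.sum_congr rfl fun u _ => ?_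
    rw [ind_fat_l]
    by_cases hfat : H.IsFat u.1
    · have hcs : cS (H.blowup f hf n) z (Sum.inl u) = cS H x u.1 := by
        rw [cS, sum_slim_split H f hf n]
        have hr : ∀ q : Σ i : Fin k, Fin (n i),
            ind ((H.blowup f hf n).graph.Adj (toR H f hf n q).1 (Sum.inl u))
              * z (toR H f hf n q) = 0 := by
          intro q
          rw [ind_adj_rW, ind_false (H.fat_not_adj (hf q.1) hfat)]
          ring
        rw [Finset.sum_congr rfl fun q _ => hr q, Finset.sum_const_zero, add_zero, cS]
        exact Finset.sum_congr rfl fun s _ => by rw [ind_adj_lW, ← hx]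
      rw [hcs]
    · rw [ind_false hfat]
      ring
  have hHF : QF H x = (∑ i, cS H x (f i) * cS H x (f i))
      + ∑ u : {v : V // v ∉ Set.range f}, ind (H.IsFat u.1) * (cS H x u.1 * cS H x u.1) := by
    rw [QF, ← Equiv.sum_comp (Equiv.sumCompl (fun v => v ∈ Set.range f))
      (fun g => ind (H.IsFat g) * (cS H x g * cS H x g)), Fintype.sum_sum_type]
    simp only [Equiv.sumCompl_apply_inl, Equiv.sumCompl_apply_inr]
    congr 1
    rw [← Equiv.sum_comp (Equiv.ofInjective f hinj)
      (fun g : Set.range f => ind (H.IsFat g.1) * (cS H x g.1 * cS H x g.1))]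
    refine Finset.sum_congr rfl fun i _ => ?_
    simp only [Equiv.ofInjective_apply]
    rw [ind_true (hf i), one_mul]
  rw [hGF, hHF]
  ring

lemma quad_blowup (hinj : Function.Injective f)
    (hx : ∀ s, x s = z (toL H f hf n s))
    (hy : ∀ i a, y i a = z (toR H f hf n ⟨i, a⟩)) :
    z ⬝ᵥ (H.blowup f hf n).matrixB *ᵥ z
      = x ⬝ᵥ H.matrixB *ᵥ x
        + ∑ i, ((cS H x (f i) + ∑ a, y i a)^2 - ∑ a, (y i a)^2) := by
  have hdec : ((∑ i, cS H x (f i) * (∑ a, y i a)) + (∑ i, cS H x (f i) * (∑ a, y i a))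
        + ((∑ i, (∑ a, y i a) * (∑ a, y i a)) - ∑ i, ∑ a, (y i a)^2))
        + ∑ i, cS H x (f i) * cS H x (f i)
      = ∑ i, ((cS H x (f i) + ∑ a, y i a)^2 - ∑ a, (y i a)^2) := by
    rw [← Finset.sum_sub_distrib, ← Finset.sum_add_distrib, ← Finset.sum_add_distrib,
      ← Finset.sum_add_distrib]
    exact Finset.sum_congr rfl fun i _ => by ring
  rw [qform, qform, QA_blowup H f hf n z x y hx hy, QF_blowup H f hf n z x hinj hx, ← hdec]
  ring

end HLT

/-- Theorem 2.14 (Hoffman's limit theorem): replacing the fat vertices `f i` by slim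
`n i`-cliques joined to all neighbors of `f i` never decreases the smallest eigenvalue,
and the smallest eigenvalue tends to `λ_min(𝔥)` as all `n i → ∞`. -/
theorem hoffman_limit_theorem {V : Type} [Fintype V] (H : HoffmanGraph V) {k : ℕ}
    (f : Fin k → V) (hinj : Function.Injective f) (hf : ∀ i, H.IsFat (f i)) :
    (∀ n : Fin k → ℕ, (∀ i, 0 < n i) → H.lambdaMin ≤ (H.blowup f hf n).lambdaMin) ∧
    Filter.Tendsto (fun n : Fin k → ℕ => (H.blowup f hf n).lambdaMin)
      Filter.atTop (nhds H.lambdaMin) := by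
  open Matrix HLT in
  have key : ∀ n : Fin k → ℕ, H.lambdaMin ≤ (H.blowup f hf n).lambdaMin := by
    intro n
    rcases isEmpty_or_nonempty (H.blowup f hf n).Slim with hE | hNE
    · haveI : IsEmpty H.Slim := ⟨fun s => hE.false (toL H f hf n s)⟩
      letI : DecidableEq ({v : V // v ∉ Set.range f} ⊕ (Σ i : Fin k, Fin (n i))) :=
        fun a b => Classical.propDecidable _
      rw [lambdaMin_eq, lambdaMin_eq, sInf_spectrum_empty, sInf_spectrum_empty]
    · haveI := hNE
      letI : DecidableEq ({v : V // v ∉ Set.range f} ⊕ (Σ i : Fin k, Fin (n i))) :=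
        fun a b => Classical.propDecidable _
      obtain ⟨z, hz1, hz2⟩ := exists_min_vec (matrixB_herm (H.blowup f hf n))
      set x : H.Slim → ℝ := fun s => z (toL H f hf n s) with hxdef
      set y : ∀ i, Fin (n i) → ℝ := fun i a => z (toR H f hf n ⟨i, a⟩) with hydef
      have hq := quad_blowup H f hf n z x y hinj (fun s => rfl) (fun i a => rfl)
      have hnorm := norm_split H f hf n z x y (fun s => rfl) (fun i a => rfl)
      have h1 : H.lambdaMin * (x ⬝ᵥ x) ≤ x ⬝ᵥ H.matrixB *ᵥ x := by
        rw [lambdaMin_eq]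
        exact rayleigh (matrixB_herm H) x
      have h2 : ∀ i : Fin k, H.lambdaMin * (∑ a, (y i a)^2)
          ≤ (HLT.cS H x (f i) + ∑ a, y i a)^2 - ∑ a, (y i a)^2 := by
        intro i
        have hneg := lambdaMin_le_neg_one H (hf i)
        have hT : (0:ℝ) ≤ ∑ a, (y i a)^2 := Finset.sum_nonneg fun a _ => sq_nonneg _
        nlinarith [sq_nonneg (HLT.cS H x (f i) + ∑ a, y i a),
          mul_le_mul_of_nonneg_right hneg hT]
      calc H.lambdaMin = H.lambdaMin * (x ⬝ᵥ x + ∑ i, ∑ a, (y i a)^2) := by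
            rw [← hnorm, hz1, mul_one]
        _ = H.lambdaMin * (x ⬝ᵥ x) + ∑ i, H.lambdaMin * (∑ a, (y i a)^2) := by
            rw [mul_add, Finset.mul_sum]
        _ ≤ x ⬝ᵥ H.matrixB *ᵥ x
              + ∑ i, ((HLT.cS H x (f i) + ∑ a, y i a)^2 - ∑ a, (y i a)^2) :=
            add_le_add h1 (Finset.sum_le_sum fun i _ => h2 i)
        _ = z ⬝ᵥ (H.blowup f hf n).matrixB *ᵥ z := hq.symm
        _ = (H.blowup f hf n).lambdaMin := by rw [lambdaMin_eq]; exact hz2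
  refine ⟨fun n _ => key n, ?_⟩
  rcases isEmpty_or_nonempty H.Slim with hE | hNE
  · haveI hEV : IsEmpty V := ⟨fun v => by
      by_cases hv : H.IsFat v
      · obtain ⟨w, hw, _⟩ := H.fat_slim_nbr hv
        exact hE.false ⟨w, hw⟩
      · exact hE.false ⟨v, hv⟩⟩
    have hlam : H.lambdaMin = 0 := by rw [lambdaMin_eq]; exact sInf_spectrum_empty
    have hconst : ∀ n : Fin k → ℕ, (H.blowup f hf n).lambdaMin = 0 := by
      intro n
      letI : DecidableEq ({v : V // v ∉ Set.range f} ⊕ (Σ i : Fin k, Fin (n i))) :=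
        fun a b => Classical.propDecidable _
      haveI : IsEmpty ((H.blowup f hf n).Slim) := ⟨fun p => by
        rcases h : (eqv H f hf n).symm p with s | q
        · exact hE.false s
        · exact hEV.false (f q.1)⟩
      rw [lambdaMin_eq]; exact sInf_spectrum_empty
    rw [hlam, funext hconst]
    exact tendsto_const_nhds
  · haveI := hNE
    obtain ⟨x, hx1, hx2⟩ := exists_min_vec (matrixB_herm H)
    set c : Fin k → ℝ := fun i => HLT.cS H x (f i) with hc
    set δ : (Fin k → ℕ) → ℝ := fun n => ∑ i, (c i)^2 / (n i) with hδ
    have hδ0 : ∀ n, 0 ≤ δ n := fun n =>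
      Finset.sum_nonneg fun i _ => div_nonneg (sq_nonneg _) (Nat.cast_nonneg _)
    have hBx : x ⬝ᵥ H.matrixB *ᵥ x = H.lambdaMin := by rw [lambdaMin_eq]; exact hx2
    have hub : ∀ n : Fin k → ℕ, (∀ i, 0 < n i) →
        (H.blowup f hf n).lambdaMin ≤ (H.lambdaMin - δ n) / (1 + δ n) := by
      intro n hn
      letI : DecidableEq ({v : V // v ∉ Set.range f} ⊕ (Σ i : Fin k, Fin (n i))) :=
        fun a b => Classical.propDecidable _
      set z : (H.blowup f hf n).Slim → ℝ :=
        fun p => Sum.elim x (fun q => -(c q.1) / (n q.1)) ((eqv H f hf n).symm p) with hz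
      set y : ∀ i, Fin (n i) → ℝ := fun i _ => -(c i) / (n i) with hy
      have hxz : ∀ s, x s = z (toL H f hf n s) := fun s => rfl
      have hyz : ∀ i a, y i a = z (toR H f hf n ⟨i, a⟩) := fun i a => rfl
      have hne : ∀ i : Fin k, ((n i : ℝ)) ≠ 0 := fun i => by
        exact_mod_cast (hn i).ne'
      have hS : ∀ i : Fin k, (∑ a : Fin (n i), y i a) = -(c i) := by
        intro i
        rw [hy]
        rw [Finset.sum_const, Finset.card_univ, Fintype.card_fin, nsmul_eq_mul]
        field_simp
        rw [mul_comm, mul_div_assoc, div_self (hne i), mul_one]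
      have hT : ∀ i : Fin k, (∑ a : Fin (n i), (y i a)^2) = (c i)^2 / (n i) := by
        intro i
        rw [hy]
        rw [Finset.sum_const, Finset.card_univ, Fintype.card_fin, nsmul_eq_mul]
        rw [div_pow, neg_pow]
        field_simp
      have hq := quad_blowup H f hf n z x y hinj hxz hyz
      have hnorm := norm_split H f hf n z x y hxz hyz
      have hzB : z ⬝ᵥ (H.blowup f hf n).matrixB *ᵥ z = H.lambdaMin - δ n := by
        rw [hq, hBx, hδ]
        have : ∀ i : Fin k, ((HLT.cS H x (f i) + ∑ a, y i a)^2 - ∑ a, (y i a)^2)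
            = -((c i)^2 / (n i)) := by
          intro i
          rw [hS i, hT i, hc]
          ring
        rw [Finset.sum_congr rfl fun i _ => this i, Finset.sum_neg_distrib]
        ring
      have hzz : z ⬝ᵥ z = 1 + δ n := by
        rw [hnorm, hx1, hδ]
        rw [Finset.sum_congr rfl fun i (_ : i ∈ Finset.univ) => hT i]
      have hray := rayleigh (matrixB_herm (H.blowup f hf n)) z
      rw [hzB, hzz] at hray
      have hpos : (0:ℝ) < 1 + δ n := by linarith [hδ0 n]
      rw [lambdaMin_eq, le_div_iff₀ hpos]
      exact hray
    have hδtend : Filter.Tendsto δ Filter.atTop (nhds 0) := by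
      rw [hδ, show (0:ℝ) = ∑ _i : Fin k, (0:ℝ) by simp]
      refine tendsto_finset_sum _ fun i _ => ?_
      have h2 : Filter.Tendsto (fun n : Fin k → ℕ => n i) Filter.atTop Filter.atTop :=
        Filter.tendsto_atTop_atTop.mpr fun b => ⟨fun _ => b, fun n hn => hn i⟩
      have h1 : Filter.Tendsto (fun n : Fin k → ℕ => ((n i : ℝ))) Filter.atTop Filter.atTop :=
        (tendsto_natCast_atTop_atTop).comp h2
      exact Filter.Tendsto.div_atTop tendsto_const_nhds h1
    have hlim : Filter.Tendsto (fun n => (H.lambdaMin - δ n) / (1 + δ n))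
        Filter.atTop (nhds H.lambdaMin) := by
      have h3 := (Filter.Tendsto.sub (tendsto_const_nhds (x := H.lambdaMin)) hδtend).div
        ((Filter.Tendsto.add (tendsto_const_nhds (x := (1:ℝ))) hδtend)) (by norm_num)
      rw [sub_zero, add_zero, div_one] at h3
      exact h3
    have hev : ∀ᶠ n : (Fin k → ℕ) in Filter.atTop, ∀ i, 0 < n i :=
      Filter.eventually_atTop.mpr ⟨fun _ => 1, fun n hn i => hn i⟩
    refine tendsto_of_tendsto_of_tendsto_of_le_of_le' tendsto_const_nhds hlim ?_ ?_
    · exact Filter.Eventually.of_forall fun n => key n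
    · exact hev.mono fun n hn => hub n hn
end

section
/- Let 𝔥 be a fat indecomposable Hoffman graph with smallest eigenvalue at least −3. Then every slim vertex of 𝔥 has at most three fat neighbors. Moreover: (i) if some slim vertex has three fat neighbors, then 𝔥 is isomorphic to 𝔥^(3); (ii) if no slim vertex has three fat neighbors and some slim vertex has exactly two fat neighbors, then Λ^red(𝔥, 3) is isomorphic to the standard lattice ℤⁿ for some positive integer n; (iii) if every slim vertex has exactly one fat neighbor, then Λ^red(𝔥, 3) is an irreducible root lattice. -/
attribute [local instance] Classical.propDecidable

open scoped RealInnerProductSpace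

/-- A sublattice of a real inner product space is integral if all inner products of its
elements are integers. -/
def IsIntegralLattice {E : Type*} [NormedAddCommGroup E] [InnerProductSpace ℝ E]
    (L : Submodule ℤ E) : Prop :=
  ∀ u ∈ L, ∀ v ∈ L, ∃ k : ℤ, ⟪u, v⟫ = (k : ℝ)

/-- A root lattice: an integral lattice generated by its vectors of norm `2`. -/
def IsRootLattice {E : Type*} [NormedAddCommGroup E] [InnerProductSpace ℝ E]
    (L : Submodule ℤ E) : Prop :=
  IsIntegralLattice L ∧ L = Submodule.span ℤ {v | v ∈ L ∧ ⟪v, v⟫ = (2 : ℝ)}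

/-- A lattice is irreducible if it is nonzero and is not the orthogonal direct sum of
two nonzero sublattices. -/
def IsIrreducibleLattice {E : Type*} [NormedAddCommGroup E] [InnerProductSpace ℝ E]
    (L : Submodule ℤ E) : Prop :=
  L ≠ ⊥ ∧ ∀ L₁ L₂ : Submodule ℤ E, L₁ ⊔ L₂ = L →
    (∀ u ∈ L₁, ∀ v ∈ L₂, ⟪u, v⟫ = (0 : ℝ)) → L₁ = ⊥ ∨ L₂ = ⊥

namespace HG3Aux

open HoffmanGraph

variable {V : Type*}

lemma exists_slim [Nonempty V] (H : HoffmanGraph V) : ∃ x, H.IsSlim x := by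
  obtain ⟨v⟩ := ‹Nonempty V›
  by_cases h : H.IsFat v
  · obtain ⟨y, hy, _⟩ := H.fat_slim_nbr h
    exact ⟨y, hy⟩
  · exact ⟨v, h⟩

lemma commonFat_self (H : HoffmanGraph V) (x : V) : H.commonFat x x = H.fatDeg x := by
  unfold HoffmanGraph.commonFat HoffmanGraph.fatDeg
  congr 1
  ext f
  simp only [Set.mem_setOf_eq]
  tauto

/-- Master lemma: an indecomposable Hoffman graph admits no partition of its slim
vertices into two nonempty parts with "orthogonal" cross pairs. -/
lemma no_orthogonal_partition (H : HoffmanGraph V) (hind : H.Indecomposable) (P : Set V)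
    (h1 : ∃ x, H.IsSlim x ∧ x ∈ P) (h2 : ∃ y, H.IsSlim y ∧ y ∉ P)
    (hcross : ∀ x y, H.IsSlim x → H.IsSlim y → x ∈ P → y ∉ P →
      (H.graph.Adj x y → H.commonFat x y = 1) ∧ (¬ H.graph.Adj x y → H.commonFat x y = 0)) :
    False := by
  apply hind
  refine ⟨{v | (H.IsSlim v ∧ v ∈ P) ∨ (H.IsFat v ∧ ∃ x, H.IsSlim x ∧ x ∈ P ∧ H.graph.Adj x v)},
          {v | (H.IsSlim v ∧ v ∉ P) ∨ (H.IsFat v ∧ ∃ x, H.IsSlim x ∧ x ∉ P ∧ H.graph.Adj x v)},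
          ?_, ?_, ?_, ?_, ?_, ?_, ?_, ?_, ?_, ?_⟩
  · obtain ⟨x, hx, hxP⟩ := h1
    exact ⟨x, Or.inl ⟨hx, hxP⟩⟩
  · obtain ⟨y, hy, hyP⟩ := h2
    exact ⟨y, Or.inl ⟨hy, hyP⟩⟩
  · rintro f hf hfat
    rcases hf with ⟨hs, _⟩ | ⟨_, x, hx, hxP, hadj⟩
    · exact absurd hfat hs
    · exact ⟨x, Or.inl ⟨hx, hxP⟩, hx, hadj.symm⟩
  · rintro f hf hfat
    rcases hf with ⟨hs, _⟩ | ⟨_, x, hx, hxP, hadj⟩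
    · exact absurd hfat hs
    · exact ⟨x, Or.inl ⟨hx, hxP⟩, hx, hadj.symm⟩
  · ext v
    simp only [Set.mem_union, Set.mem_setOf_eq, Set.mem_univ, iff_true]
    by_cases hs : H.IsFat v
    · obtain ⟨y, hy, hadj⟩ := H.fat_slim_nbr hs
      by_cases hyP : y ∈ P
      · exact Or.inl (Or.inr ⟨hs, y, hy, hyP, hadj.symm⟩)
      · exact Or.inr (Or.inr ⟨hs, y, hy, hyP, hadj.symm⟩)
    · by_cases hvP : v ∈ P
      · exact Or.inl (Or.inl ⟨hs, hvP⟩)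
      · exact Or.inr (Or.inl ⟨hs, hvP⟩)
  · intro v hv
    simp only [Set.mem_setOf_eq]
    constructor
    · rintro (⟨_, hvP⟩ | ⟨hfat, _⟩) h
      · rcases h with ⟨_, hvP'⟩ | ⟨hfat, _⟩
        · exact hvP' hvP
        · exact hv hfat
      · exact hv hfat
    · intro h
      by_cases hvP : v ∈ P
      · exact Or.inl ⟨hv, hvP⟩
      · exact absurd (Or.inl ⟨hv, hvP⟩) h
  · rintro x hx hxs f hfat hadj
    rcases hx with ⟨_, hxP⟩ | ⟨hf, _⟩
    · exact Or.inr ⟨hfat, x, hxs, hxP, hadj⟩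
    · exact absurd hf hxs
  · rintro x hx hxs f hfat hadj
    rcases hx with ⟨_, hxP⟩ | ⟨hf, _⟩
    · exact Or.inr ⟨hfat, x, hxs, hxP, hadj⟩
    · exact absurd hf hxs
  · rintro x hx y hy hxs hys
    have hxP : x ∈ P := by
      rcases hx with ⟨_, hxP⟩ | ⟨hf, _⟩
      · exact hxP
      · exact absurd hf hxs
    have hyP : y ∉ P := by
      rcases hy with ⟨_, hyP⟩ | ⟨hf, _⟩
      · exact hyP
      · exact absurd hf hys
    obtain ⟨ha, hna⟩ := hcross x y hxs hys hxP hyP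
    by_cases hadj : H.graph.Adj x y
    · exact (ha hadj).le
    · exact (hna hadj).le.trans (by norm_num)
  · rintro x hx y hy hxs hys
    have hxP : x ∈ P := by
      rcases hx with ⟨_, hxP⟩ | ⟨hf, _⟩
      · exact hxP
      · exact absurd hf hxs
    have hyP : y ∉ P := by
      rcases hy with ⟨_, hyP⟩ | ⟨hf, _⟩
      · exact hyP
      · exact absurd hf hys
    obtain ⟨ha, hna⟩ := hcross x y hxs hys hxP hyP
    constructor
    · intro h1
      by_contra hadj
      rw [hna hadj] at h1
      exact absurd h1 (by norm_num)
    · exact ha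

end HG3Aux
namespace HG3Aux

open HoffmanGraph

variable {V : Type} [Fintype V]

omit [Fintype V] in
lemma matrixB_isHermitian (H : HoffmanGraph V) : (H.matrixB).IsHermitian := by
  ext x y
  simp only [Matrix.conjTranspose_apply, HoffmanGraph.matrixB, star_trivial]
  rw [H.commonFat_comm y.1 x.1, H.graph.adj_comm]

lemma shifted_posSemidef (H : HoffmanGraph V) (hmin : -3 ≤ H.lambdaMin) :
    Matrix.PosSemidef (H.matrixB + (3 : ℝ) • (1 : Matrix H.Slim H.Slim ℝ)) := by
  have hone : ((3 : ℝ) • (1 : Matrix H.Slim H.Slim ℝ)).IsHermitian := by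
    unfold Matrix.IsHermitian
    ext i j
    simp [Matrix.conjTranspose_apply, Matrix.one_apply, eq_comm]
  have hH : (H.matrixB + (3 : ℝ) • (1 : Matrix H.Slim H.Slim ℝ)).IsHermitian :=
    (matrixB_isHermitian H).add hone
  apply hH.posSemidef_iff_eigenvalues_nonneg.mpr
  intro i
  have hmem := hH.eigenvalues_mem_spectrum_real i
  have heq : H.matrixB + (3 : ℝ) • (1 : Matrix H.Slim H.Slim ℝ)
      = algebraMap ℝ (Matrix H.Slim H.Slim ℝ) 3 + H.matrixB := by
    rw [Algebra.algebraMap_eq_smul_one, add_comm]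
  have h2 : hH.eigenvalues i - 3 ∈ spectrum ℝ H.matrixB := by
    rw [← spectrum.add_mem_add_iff (s := (3 : ℝ))]
    rw [← heq, sub_add_cancel]
    exact hmem
  have hbdd : BddBelow (spectrum ℝ H.matrixB) := (Matrix.finite_spectrum _).bddBelow
  have hle := csInf_le hbdd h2
  have : -3 ≤ hH.eigenvalues i - 3 := le_trans hmin hle
  simp only [Pi.zero_apply]; linarith

lemma quad_single (M : Matrix V V ℝ) (x : V) :
    dotProduct (Pi.single x (1 : ℝ)) (M.mulVec (Pi.single x 1)) = M x x := by
  simp [Matrix.mulVec_single, dotProduct, Pi.single_apply]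

lemma quad_single2 (M : Matrix V V ℝ) (a b : V) :
    dotProduct (Pi.single a (1 : ℝ)) (M.mulVec (Pi.single b 1)) = M a b := by
  simp [Matrix.mulVec_single, dotProduct, Pi.single_apply]

lemma quad_pair (M : Matrix V V ℝ) (hsymm : M.IsHermitian) (x y : V) (hxy : x ≠ y) (t : ℝ) :
    dotProduct ((Pi.single y 1 : V → ℝ) + t • (Pi.single x 1 : V → ℝ))
      (M.mulVec ((Pi.single y 1 : V → ℝ) + t • (Pi.single x 1 : V → ℝ)))
      = M y y + 2 * t * M x y + t ^ 2 * M x x := by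
  have hsym : M y x = M x y := by
    conv_lhs => rw [← hsymm]
    simp [Matrix.conjTranspose_apply]
  simp only [Matrix.mulVec_add, Matrix.mulVec_smul, add_dotProduct,
    smul_dotProduct, dotProduct_add, dotProduct_smul,
    smul_eq_mul, quad_single2]
  rw [hsym]
  ring

lemma psd_diag_nonneg {M : Matrix V V ℝ} (hpsd : M.PosSemidef) (x : V) : 0 ≤ M x x := by
  have h := hpsd.dotProduct_mulVec_nonneg (Pi.single x (1 : ℝ))
  rw [star_trivial, quad_single] at h
  exact h

/-- From PSD and a zero diagonal entry, off-diagonal entries in that row vanish. -/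
lemma offdiag_zero_of_diag_zero {M : Matrix V V ℝ} (hpsd : M.PosSemidef)
    {x y : V} (hxy : x ≠ y) (hdiag : M x x = 0) : M x y = 0 := by
  by_contra hne
  have key : ∀ t : ℝ, 0 ≤ M y y + 2 * t * M x y := by
    intro t
    have h := hpsd.dotProduct_mulVec_nonneg ((Pi.single y 1 : V → ℝ) + t • (Pi.single x 1 : V → ℝ))
    rw [star_trivial, quad_pair M hpsd.1 x y hxy t, hdiag] at h
    simpa using h
  have h := key (-(M y y + 1) / (2 * M x y))
  have heq : 2 * (-(M y y + 1) / (2 * M x y)) * M x y = -(M y y + 1) := by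
    field_simp
  rw [heq] at h
  linarith

end HG3Aux
namespace HG3Aux

open HoffmanGraph

variable {V : Type} [Fintype V]

lemma fatDeg_le_three (H : HoffmanGraph V) (hmin : -3 ≤ H.lambdaMin)
    {x : V} (hx : H.IsSlim x) : H.fatDeg x ≤ 3 := by
  have hpsd := shifted_posSemidef H hmin
  have h := psd_diag_nonneg hpsd (⟨x, hx⟩ : H.Slim)
  have hMxx : (H.matrixB + (3 : ℝ) • (1 : Matrix H.Slim H.Slim ℝ)) ⟨x, hx⟩ ⟨x, hx⟩
      = (0 - (H.fatDeg x : ℝ)) + 3 := by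
    rw [Matrix.add_apply, Matrix.smul_apply, Matrix.one_apply_eq]
    unfold HoffmanGraph.matrixB
    rw [if_neg (H.graph.irrefl), commonFat_self]
    norm_num
  rw [hMxx] at h
  have : (H.fatDeg x : ℝ) ≤ 3 := by linarith
  exact_mod_cast this

lemma cross_of_fatDeg_three (H : HoffmanGraph V) (hmin : -3 ≤ H.lambdaMin)
    {x y : V} (hx : H.IsSlim x) (h3 : H.fatDeg x = 3) (hy : H.IsSlim y) (hne : x ≠ y) :
    (H.graph.Adj x y → H.commonFat x y = 1) ∧ (¬ H.graph.Adj x y → H.commonFat x y = 0) := by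
  have hpsd := shifted_posSemidef H hmin
  set M := H.matrixB + (3 : ℝ) • (1 : Matrix H.Slim H.Slim ℝ) with hM
  have hsub : (⟨x, hx⟩ : H.Slim) ≠ ⟨y, hy⟩ := fun h => hne (congrArg Subtype.val h)
  have hdiag : M ⟨x, hx⟩ ⟨x, hx⟩ = 0 := by
    rw [hM, Matrix.add_apply, Matrix.smul_apply, Matrix.one_apply_eq]
    unfold HoffmanGraph.matrixB
    rw [if_neg (H.graph.irrefl), commonFat_self, h3]
    norm_num
  have hoff := offdiag_zero_of_diag_zero hpsd hsub hdiag
  rw [hM, Matrix.add_apply, Matrix.smul_apply, Matrix.one_apply_ne hsub] at hoff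
  unfold HoffmanGraph.matrixB at hoff
  simp only [smul_eq_mul, mul_zero, add_zero] at hoff
  constructor
  · intro hadj
    rw [if_pos hadj] at hoff
    have : (H.commonFat x y : ℝ) = 1 := by linarith
    exact_mod_cast this
  · intro hadj
    rw [if_neg hadj] at hoff
    have : (H.commonFat x y : ℝ) = 0 := by linarith
    exact_mod_cast this

lemma iso_manyFat (H : HoffmanGraph V) [Nonempty V] (hind : H.Indecomposable)
    (hmin : -3 ≤ H.lambdaMin) {x : V} (hx : H.IsSlim x) (h3 : H.fatDeg x = 3) :
    H.IsIsoTo (HoffmanGraph.manyFat 3) := by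
  classical
  -- every slim vertex equals x
  have huniq : ∀ v, H.IsSlim v → v = x := by
    intro y hy
    by_contra hne
    refine no_orthogonal_partition H hind {x} ⟨x, hx, rfl⟩ ⟨y, hy, ?_⟩ ?_
    · simpa using (fun h => hne h)
    · intro a b ha hb haP hbP
      have hax : a = x := haP
      subst hax
      have hbx : a ≠ b := fun h => hbP (h ▸ haP)
      exact cross_of_fatDeg_three H hmin ha h3 hb hbx
  -- every fat vertex is adjacent to x
  have hadjx : ∀ f, H.IsFat f → H.graph.Adj x f := by
    intro f hf
    obtain ⟨z, hz, hadj⟩ := H.fat_slim_nbr hf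
    rw [huniq z hz] at hadj
    exact hadj.symm
  -- the set of fat vertices has exactly 3 elements
  set S : Set V := {f | H.IsFat f} with hS
  have hSeq : {f : V | H.IsFat f ∧ H.graph.Adj x f} = S := by
    ext f
    simp only [hS, Set.mem_setOf_eq]
    exact ⟨fun h => h.1, fun h => ⟨h, hadjx f h⟩⟩
  have hcard : Fintype.card ↥S = 3 := by
    have : S.ncard = 3 := by
      rw [← hSeq]
      exact h3
    rwa [Set.ncard_eq_toFinset_card', Set.toFinset_card] at this
  obtain eF := Fintype.equivFinOfCardEq hcard
  have hxslim : ¬ H.IsFat x := hx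
  refine ⟨⟨fun v => if h : H.IsFat v then some (eF ⟨v, h⟩) else none,
      fun o => o.elim x (fun i => (eF.symm i).1), ?_, ?_⟩, ?_, ?_⟩
  · intro v
    by_cases h : H.IsFat v
    · simp [h]
    · simp [h]
      exact (huniq v h).symm
  · intro o
    cases o with
    | none => simp [hxslim]
    | some i =>
      have hfi : H.IsFat (eF.symm i).1 := (eF.symm i).2
      simp only [Option.elim, dif_pos hfi]
      exact (dif_pos hfi).trans (congrArg some (eF.apply_symm_apply i))
  · intro a b
    show ((_ = none ∧ _ ≠ none) ∨ (_ ≠ none ∧ _ = none)) ↔ _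
    by_cases ha : H.IsFat a <;> by_cases hb : H.IsFat b
    · simp only [Equiv.coe_fn_mk, dif_pos ha, dif_pos hb]
      constructor
      · rintro (⟨h1, _⟩ | ⟨_, h1⟩) <;> exact absurd h1 (Option.some_ne_none _)
      · intro h
        exact absurd h (H.fat_not_adj ha hb)
    · have hbx : b = x := huniq b hb
      subst hbx
      simp only [Equiv.coe_fn_mk, dif_pos ha, dif_neg hb]
      constructor
      · intro _
        exact (hadjx a ha).symm
      · intro _
        exact Or.inr ⟨Option.some_ne_none _, trivial⟩
    · have hax : a = x := huniq a ha
      subst hax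
      simp only [Equiv.coe_fn_mk, dif_neg ha, dif_pos hb]
      constructor
      · intro _
        exact hadjx b hb
      · intro _
        exact Or.inl ⟨trivial, Option.some_ne_none _⟩
    · have hax : a = x := huniq a ha
      have hbx : b = x := huniq b hb
      subst hax; subst hbx
      simp only [Equiv.coe_fn_mk, dif_neg ha]
      constructor
      · rintro (⟨h1, h2⟩ | ⟨h1, h2⟩)
        · exact absurd rfl h2
        · exact absurd rfl h1
      · intro h
        exact absurd h (H.graph.irrefl)
  · intro v
    show (_ ≠ none) ↔ _
    by_cases h : H.IsFat v
    · simp [dif_pos h, h]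
    · simp [dif_neg h, h]

end HG3Aux
namespace HG3Aux

section Lattice

variable {E : Type*} [NormedAddCommGroup E] [InnerProductSpace ℝ E]

lemma inner_int_of_mem_span {G : Set E} (hG : ∀ u ∈ G, ∀ v ∈ G, ∃ k : ℤ, ⟪u, v⟫ = k) :
    ∀ u ∈ Submodule.span ℤ G, ∀ v ∈ Submodule.span ℤ G, ∃ k : ℤ, ⟪u, v⟫ = k := by
  have step1 : ∀ g ∈ G, ∀ v ∈ Submodule.span ℤ G, ∃ k : ℤ, ⟪g, v⟫ = k := by
    intro g hg v hv
    induction hv using Submodule.span_induction with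
    | mem x hx => exact hG g hg x hx
    | zero => exact ⟨0, by simp⟩
    | add x y hx hy ihx ihy =>
        obtain ⟨k, hk⟩ := ihx
        obtain ⟨l, hl⟩ := ihy
        exact ⟨k + l, by rw [inner_add_right, hk, hl]; push_cast; ring⟩
    | smul a x hx ihx =>
        obtain ⟨k, hk⟩ := ihx
        refine ⟨a * k, ?_⟩
        rw [← Int.cast_smul_eq_zsmul ℝ, real_inner_smul_right, hk]
        push_cast; ring
  intro u hu
  induction hu using Submodule.span_induction with
  | mem x hx => exact step1 x hx
  | zero => exact fun v hv => ⟨0, by simp⟩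
  | add x y hx hy ihx ihy =>
      intro v hv
      obtain ⟨k, hk⟩ := ihx v hv
      obtain ⟨l, hl⟩ := ihy v hv
      exact ⟨k + l, by rw [inner_add_left, hk, hl]; push_cast; ring⟩
  | smul a x hx ihx =>
      intro v hv
      obtain ⟨k, hk⟩ := ihx v hv
      refine ⟨a * k, ?_⟩
      rw [← Int.cast_smul_eq_zsmul ℝ, real_inner_smul_left, hk]
      push_cast; ring

lemma even_norm_of_mem_span {G : Set E} (hG : ∀ u ∈ G, ∀ v ∈ G, ∃ k : ℤ, ⟪u, v⟫ = k)
    (h2 : ∀ g ∈ G, ⟪g, g⟫ = (2 : ℝ)) :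
    ∀ v ∈ Submodule.span ℤ G, ∃ k : ℤ, ⟪v, v⟫ = 2 * k := by
  have hint := inner_int_of_mem_span hG
  intro v hv
  induction hv using Submodule.span_induction with
  | mem x hx => exact ⟨1, by rw [h2 x hx]; norm_num⟩
  | zero => exact ⟨0, by simp⟩
  | add x y hx hy ihx ihy =>
      obtain ⟨k, hk⟩ := ihx
      obtain ⟨l, hl⟩ := ihy
      obtain ⟨m, hm⟩ := hint x hx y hy
      refine ⟨k + l + m, ?_⟩
      rw [real_inner_add_add_self, hk, hl, hm]
      push_cast; ring
  | smul a x hx ihx =>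
      obtain ⟨k, hk⟩ := ihx
      refine ⟨a ^ 2 * k, ?_⟩
      rw [← Int.cast_smul_eq_zsmul ℝ, real_inner_smul_left, real_inner_smul_right, hk]
      push_cast; ring

lemma norm_one_of_inner_self {u : E} (h : ⟪u, u⟫ = (1 : ℝ)) : ‖u‖ = 1 := by
  have h2 := real_inner_self_eq_norm_mul_norm u
  rw [h] at h2
  nlinarith [norm_nonneg u]

lemma int_abs_le_one_of_sq_le_two {k : ℤ} (h : (k : ℝ) * (k : ℝ) ≤ 2) : k = -1 ∨ k = 0 ∨ k = 1 := by
  have h2 : k * k ≤ 2 := by exact_mod_cast h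
  have h1 : -1 ≤ k ∧ k ≤ 1 := by constructor <;> nlinarith
  omega

lemma eq_or_eq_neg_of_inner_ne_zero {u w : E}
    (hu : ⟪u, u⟫ = (1 : ℝ)) (hw : ⟪w, w⟫ = (1 : ℝ))
    (hk : ∃ k : ℤ, ⟪u, w⟫ = k) (hne : ⟪u, w⟫ ≠ 0) : u = w ∨ u = -w := by
  obtain ⟨k, hkk⟩ := hk
  have hcs := real_inner_mul_inner_self_le u w
  rw [hu, hw, hkk] at hcs
  have hk0 : k ≠ 0 := by
    intro h
    rw [h] at hkk
    exact hne (by simpa using hkk)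
  have := int_abs_le_one_of_sq_le_two (by linarith)
  have hnu : ‖u‖ = 1 := norm_one_of_inner_self hu
  have hnw : ‖w‖ = 1 := norm_one_of_inner_self hw
  rcases this with h | h | h
  · right
    rw [← inner_eq_one_iff_of_norm_eq_one (𝕜 := ℝ) hnu (show ‖-w‖ = 1 by simpa using hnw)]
    rw [inner_neg_right, hkk, h]
    norm_num
  · exact absurd h hk0
  · left
    rw [← inner_eq_one_iff_of_norm_eq_one (𝕜 := ℝ) hnu hnw, hkk, h]
    norm_num

/-- Reduction step: a norm-2 vector of the lattice having nonzero inner product with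
an element of the span of the unit vectors lies in that span. -/
lemma mem_unit_span_of_inner_ne_zero {G : Set E}
    (hG : ∀ u ∈ G, ∀ v ∈ G, ∃ k : ℤ, ⟪u, v⟫ = k)
    {b m : E} (hbG : b ∈ Submodule.span ℤ G)
    (hb2 : ⟪b, b⟫ = (1 : ℝ) ∨ ⟪b, b⟫ = (2 : ℝ))
    (hm : m ∈ Submodule.span ℤ {u : E | u ∈ Submodule.span ℤ G ∧ ⟪u, u⟫ = (1 : ℝ)})
    (hne : ⟪b, m⟫ ≠ 0) :
    b ∈ Submodule.span ℤ {u : E | u ∈ Submodule.span ℤ G ∧ ⟪u, u⟫ = (1 : ℝ)} := by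
  set U : Set E := {u : E | u ∈ Submodule.span ℤ G ∧ ⟪u, u⟫ = (1 : ℝ)} with hU
  have hint := inner_int_of_mem_span hG
  rcases hb2 with hb1 | hb2
  · exact Submodule.subset_span ⟨hbG, hb1⟩
  -- find a unit vector with nonzero inner product with b
  have hex : ∃ u ∈ U, ⟪b, u⟫ ≠ 0 := by
    by_contra hall
    push_neg at hall
    have hzero : ∀ m' ∈ Submodule.span ℤ U, ⟪b, m'⟫ = 0 := by
      intro m' hm'
      induction hm' using Submodule.span_induction with
      | mem x hx => exact hall x hx
      | zero => simp
      | add x y hx hy ihx ihy => rw [inner_add_right, ihx, ihy]; ring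
      | smul a x hx ihx =>
          rw [← Int.cast_smul_eq_zsmul ℝ, real_inner_smul_right, ihx]; ring
    exact hne (hzero m hm)
  obtain ⟨u, huU, hbu⟩ := hex
  obtain ⟨k, hk⟩ := hint b hbG u huU.1
  have hk0 : k ≠ 0 := by
    intro h
    rw [h] at hk
    exact hbu (by simpa using hk)
  have hcs := real_inner_mul_inner_self_le b u
  rw [hb2, huU.2, hk] at hcs
  have hk1 : k = -1 ∨ k = 1 := by
    rcases int_abs_le_one_of_sq_le_two (by linarith) with h | h | h
    · exact Or.inl h
    · exact absurd h hk0
    · exact Or.inr h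
  have hksq : (k : ℝ) * (k : ℝ) = 1 := by
    rcases hk1 with h | h <;> rw [h] <;> norm_num
  -- w := b - k • u is a unit vector of the lattice
  set w : E := b - (k : ℝ) • u with hw
  have hwL : w ∈ Submodule.span ℤ G := by
    apply Submodule.sub_mem _ hbG
    rw [Int.cast_smul_eq_zsmul]
    exact Submodule.smul_mem _ k huU.1
  have hww : ⟪w, w⟫ = (1 : ℝ) := by
    rw [hw, real_inner_sub_sub_self, real_inner_smul_right, real_inner_smul_left,
      real_inner_smul_right, hk, huU.2, hb2]
    nlinarith [hksq]
  have hwU : w ∈ U := ⟨hwL, hww⟩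
  have : b = w + (k : ℝ) • u := by rw [hw]; abel
  rw [this]
  apply Submodule.add_mem _ (Submodule.subset_span hwU)
  rw [Int.cast_smul_eq_zsmul]
  exact Submodule.smul_mem _ k (Submodule.subset_span huU)

end Lattice

end HG3Aux
namespace HG3Aux

variable {E : Type*} [NormedAddCommGroup E] [InnerProductSpace ℝ E]

lemma exists_std_basis [FiniteDimensional ℝ E] (G : Set E)
    (hG : ∀ u ∈ G, ∀ v ∈ G, ∃ k : ℤ, ⟪u, v⟫ = k)
    (hsub : G ⊆ (Submodule.span ℤ {u : E | u ∈ Submodule.span ℤ G ∧ ⟪u, u⟫ = (1 : ℝ)} : Set E))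
    (hone : ∃ e, e ∈ Submodule.span ℤ G ∧ ⟪e, e⟫ = (1 : ℝ)) :
    ∃ n : ℕ, 0 < n ∧ ∃ g : (Submodule.span ℤ G) ≃ₗ[ℤ] (Fin n → ℤ),
      ∀ u v : Submodule.span ℤ G, ⟪(u : E), (v : E)⟫ = ∑ i, (g u i : ℝ) * (g v i : ℝ) := by
  classical
  set U : Set E := {u : E | u ∈ Submodule.span ℤ G ∧ ⟪u, u⟫ = (1 : ℝ)} with hUdef
  obtain ⟨e, heL, he1⟩ := hone
  have heU : e ∈ U := ⟨heL, he1⟩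
  have hint := inner_int_of_mem_span hG
  set S : Set (Set E) :=
    {B | B ⊆ U ∧ ∀ u ∈ B, ∀ w ∈ B, u ≠ w → ⟪u, w⟫ = (0 : ℝ)} with hSdef
  have hzorn := zorn_subset_nonempty S ?_ {e} ?_
  rotate_left
  · intro c hcS hchain _
    refine ⟨⋃₀ c, ⟨?_, ?_⟩, fun s hs => Set.subset_sUnion_of_mem hs⟩
    · exact Set.sUnion_subset fun s hs => (hcS hs).1
    · intro u hu w hw hne
      obtain ⟨s, hsc, hus⟩ := hu
      obtain ⟨t, htc, hwt⟩ := hw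
      by_cases hst : s = t
      · subst hst
        exact (hcS hsc).2 u hus w hwt hne
      · rcases hchain hsc htc hst with h | h
        · exact (hcS htc).2 u (h hus) w hwt hne
        · exact (hcS hsc).2 u hus w (h hwt) hne
  · refine ⟨Set.singleton_subset_iff.mpr heU, ?_⟩
    intro u hu w hw hne
    rw [Set.mem_singleton_iff] at hu hw
    exact absurd (hu.trans hw.symm) hne
  obtain ⟨B, heB, hBmax⟩ := hzorn
  have hBU : B ⊆ U := hBmax.1.1
  have hBortho : ∀ u ∈ B, ∀ w ∈ B, u ≠ w → ⟪u, w⟫ = (0 : ℝ) := hBmax.1.2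
  have heB' : e ∈ B := heB rfl
  have hUspan : U ⊆ (Submodule.span ℤ B : Set E) := by
    intro u huU
    by_cases huB : u ∈ B
    · exact Submodule.subset_span huB
    · have hex : ∃ x ∈ B, ⟪u, x⟫ ≠ 0 := by
        by_contra hall
        push_neg at hall
        have hins : insert u B ∈ S := by
          refine ⟨Set.insert_subset huU hBU, ?_⟩
          intro a ha c hc hne
          rcases Set.mem_insert_iff.1 ha with rfl | haB
          · rcases Set.mem_insert_iff.1 hc with rfl | hcB
            · exact absurd rfl hne
            · exact hall c hcB
          · rcases Set.mem_insert_iff.1 hc with rfl | hcB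
            · rw [real_inner_comm]; exact hall a haB
            · exact hBortho a haB c hcB hne
        have := hBmax.2 hins (Set.subset_insert u B)
        exact huB (this (Set.mem_insert u B))
      obtain ⟨x, hxB, hux⟩ := hex
      rcases eq_or_eq_neg_of_inner_ne_zero huU.2 (hBU hxB).2
          (hint u huU.1 x (hBU hxB).1) hux with h | h
      · rw [h]; exact Submodule.subset_span hxB
      · rw [h]; exact Submodule.neg_mem _ (Submodule.subset_span hxB)
  have hLB : Submodule.span ℤ G = Submodule.span ℤ B := by
    apply le_antisymm
    · rw [Submodule.span_le]
      intro g hg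
      have h1 : g ∈ Submodule.span ℤ U := hsub hg
      have h2 : Submodule.span ℤ U ≤ Submodule.span ℤ B := Submodule.span_le.mpr hUspan
      exact h2 h1
    · rw [Submodule.span_le]
      intro x hx
      exact (hBU hx).1
  have hBnorm : Orthonormal ℝ ((↑) : B → E) := by
    rw [orthonormal_subtype_iff_ite]
    intro x hx w hw
    by_cases hvw : x = w
    · simp [hvw, norm_one_of_inner_self (hBU hw).2]
    · simp [hvw, hBortho x hx w hw hvw]
  have hBfin : B.Finite := hBnorm.linearIndependent.setFinite
  haveI := hBfin.fintype
  set n := Fintype.card ↥B with hn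
  have hnpos : 0 < n := Fintype.card_pos_iff.mpr ⟨⟨e, heB'⟩⟩
  obtain eB := Fintype.equivFin ↥B
  set v : Fin n → E := fun i => ((eB.symm i : ↥B) : E) with hvdef
  have hrange : Set.range v = B := by
    ext x
    constructor
    · rintro ⟨i, rfl⟩
      exact (eB.symm i).2
    · intro hx
      exact ⟨eB ⟨x, hx⟩, by simp [hvdef]⟩
  have horthov : ∀ i j, ⟪v i, v j⟫ = if i = j then (1 : ℝ) else 0 := by
    intro i j
    by_cases hij : i = j
    · simp only [hij, if_pos rfl]
      exact (hBU (eB.symm j).2).2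
    · have h1 : (eB.symm i : ↥B) ≠ eB.symm j := by
        intro h
        exact hij (by simpa using congrArg eB h)
      have hne : v i ≠ v j := fun h => h1 (Subtype.ext h)
      rw [if_neg hij]
      exact hBortho _ (eB.symm i).2 _ (eB.symm j).2 hne
  have hliR : LinearIndependent ℝ v := by
    have : Orthonormal ℝ v := by
      rw [orthonormal_iff_ite]
      exact horthov
    exact this.linearIndependent
  have hliZ : LinearIndependent ℤ v := by
    apply hliR.restrict_scalars
    intro a b hab
    have : ((a : ℝ)) = ((b : ℝ)) := by
      simpa [zsmul_eq_mul] using hab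
    exact_mod_cast this
  have heq : Submodule.span ℤ (Set.range v) = Submodule.span ℤ G := by rw [hrange, hLB]
  set b : Module.Basis (Fin n) ℤ ↥(Submodule.span ℤ G) :=
    (Module.Basis.span hliZ).map (LinearEquiv.ofEq _ _ heq) with hbdef
  have hbi : ∀ i, ((b i : ↥(Submodule.span ℤ G)) : E) = v i := by
    intro i
    rw [hbdef, Module.Basis.map_apply]
    have h2 := Module.Basis.span_apply hliZ i
    rw [h2]
    rfl
  refine ⟨n, hnpos, b.equivFun, ?_⟩
  intro x y
  have hrepr : ∀ z : ↥(Submodule.span ℤ G), (z : E) = ∑ i, ((b.repr z i : ℝ)) • v i := by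
    intro z
    conv_lhs => rw [← b.sum_repr z]
    rw [AddSubmonoidClass.coe_finset_sum]
    apply Finset.sum_congr rfl
    intro i _
    rw [SetLike.val_smul, hbi i, Int.cast_smul_eq_zsmul]
  rw [hrepr x, hrepr y]
  simp only [sum_inner, inner_sum, real_inner_smul_left, real_inner_smul_right, horthov,
    mul_ite, mul_one, mul_zero, Finset.sum_ite_eq', Finset.sum_ite_eq, Finset.mem_univ, if_true,
    Module.Basis.equivFun_apply]
  exact Finset.sum_congr rfl fun i _ => mul_comm _ _

end HG3Aux
namespace HG3Aux

open HoffmanGraph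

variable {V : Type} [Fintype V]

lemma gram (H : HoffmanGraph V) {d : ℕ} {ψ : V → EuclideanSpace ℝ (Fin d)}
    (hψ : H.IsReducedRep 3 ψ) :
    ∀ u ∈ ψ '' {v | H.IsSlim v}, ∀ w ∈ ψ '' {v | H.IsSlim v}, ∃ k : ℤ, ⟪u, w⟫ = k := by
  rintro _ ⟨x, hx, rfl⟩ _ ⟨y, hy, rfl⟩
  by_cases hxy : x = y
  · subst hxy
    exact ⟨3 - H.fatDeg x, by rw [hψ.1 x hx]; push_cast; ring⟩
  · by_cases hadj : H.graph.Adj x y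
    · exact ⟨1 - H.commonFat x y, by rw [hψ.2.1 x y hx hy hadj]; push_cast; ring⟩
    · exact ⟨-(H.commonFat x y), by rw [hψ.2.2 x y hx hy hxy hadj]; push_cast; ring⟩

lemma cross_of_inner_zero (H : HoffmanGraph V) {d : ℕ} {ψ : V → EuclideanSpace ℝ (Fin d)}
    (hψ : H.IsReducedRep 3 ψ) {x y : V} (hx : H.IsSlim x) (hy : H.IsSlim y) (hxy : x ≠ y)
    (h0 : ⟪ψ x, ψ y⟫ = 0) :
    (H.graph.Adj x y → H.commonFat x y = 1) ∧ (¬ H.graph.Adj x y → H.commonFat x y = 0) := by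
  constructor
  · intro hadj
    have h := hψ.2.1 x y hx hy hadj
    rw [h0] at h
    have : (H.commonFat x y : ℝ) = 1 := by linarith
    exact_mod_cast this
  · intro hadj
    have h := hψ.2.2 x y hx hy hxy hadj
    rw [h0] at h
    have : (H.commonFat x y : ℝ) = 0 := by linarith
    exact_mod_cast this

lemma one_le_fatDeg (H : HoffmanGraph V) (hfat : H.IsFatGraph) {x : V} (hx : H.IsSlim x) :
    1 ≤ H.fatDeg x := by
  obtain ⟨f, hf, hadj⟩ := hfat x hx
  have hfin : {f' : V | H.IsFat f' ∧ H.graph.Adj x f'}.Finite := Set.toFinite _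
  exact (Set.ncard_pos hfin).mpr ⟨f, hf, hadj⟩

lemma part_iii [Nonempty V] (H : HoffmanGraph V) (hind : H.Indecomposable) {d : ℕ}
    {ψ : V → EuclideanSpace ℝ (Fin d)} (hψ : H.IsReducedRep 3 ψ)
    (h1 : ∀ x, H.IsSlim x → H.fatDeg x = 1) :
    IsRootLattice (Submodule.span ℤ (ψ '' {v | H.IsSlim v})) ∧
    IsIrreducibleLattice (Submodule.span ℤ (ψ '' {v | H.IsSlim v})) := by
  set G := ψ '' {v | H.IsSlim v} with hGdef
  have hG := gram H hψ
  have hnorm2 : ∀ g ∈ G, ⟪g, g⟫ = (2 : ℝ) := by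
    rintro _ ⟨x, hx, rfl⟩
    rw [hψ.1 x hx, h1 x hx]
    norm_num
  have hint := inner_int_of_mem_span hG
  have heven := even_norm_of_mem_span hG hnorm2
  obtain ⟨x₀, hx₀⟩ := exists_slim H
  have hx₀G : ψ x₀ ∈ G := ⟨x₀, hx₀, rfl⟩
  refine ⟨⟨hint, ?_⟩, ?_, ?_⟩
  · apply le_antisymm
    · apply Submodule.span_le.mpr
      intro g hg
      exact Submodule.subset_span ⟨Submodule.subset_span hg, hnorm2 g hg⟩
    · apply Submodule.span_le.mpr
      intro s hs
      exact hs.1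
  · intro hbot
    have hmem : ψ x₀ ∈ Submodule.span ℤ G := Submodule.subset_span hx₀G
    rw [hbot, Submodule.mem_bot] at hmem
    have h2 := hnorm2 _ hx₀G
    rw [hmem] at h2
    simp at h2
  · intro L₁ L₂ hsup horth
    have hL₁ : L₁ ≤ Submodule.span ℤ G := hsup ▸ le_sup_left
    have hL₂ : L₂ ≤ Submodule.span ℤ G := hsup ▸ le_sup_right
    have hnotboth : ∀ x, H.IsSlim x → ¬ (ψ x ∈ L₁ ∧ ψ x ∈ L₂) := by
      rintro x hx ⟨hm1, hm2⟩
      have h0 := horth _ hm1 _ hm2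
      have h2 := hnorm2 _ ⟨x, hx, rfl⟩
      rw [h0] at h2
      norm_num at h2
    have hdich : ∀ x, H.IsSlim x → ψ x ∈ L₁ ∨ ψ x ∈ L₂ := by
      intro x hx
      have hmem : ψ x ∈ L₁ ⊔ L₂ := by
        rw [hsup]
        exact Submodule.subset_span ⟨x, hx, rfl⟩
      obtain ⟨u, hu, w, hw, huw⟩ := Submodule.mem_sup.mp hmem
      obtain ⟨k, hk⟩ := heven u (hL₁ hu)
      obtain ⟨l, hl⟩ := heven w (hL₂ hw)
      have h0 := horth u hu w hw
      have hsum : ⟪ψ x, ψ x⟫ = ⟪u, u⟫ + ⟪w, w⟫ := by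
        rw [← huw, real_inner_add_add_self, h0]
        ring
      have h2 : ⟪ψ x, ψ x⟫ = (2 : ℝ) := hnorm2 _ ⟨x, hx, rfl⟩
      have hku : (0 : ℝ) ≤ ⟪u, u⟫ := real_inner_self_nonneg
      have hlw : (0 : ℝ) ≤ ⟪w, w⟫ := real_inner_self_nonneg
      have hk0 : (0 : ℝ) ≤ (k : ℝ) := by nlinarith
      have hl0 : (0 : ℝ) ≤ (l : ℝ) := by nlinarith
      have hkl : (k : ℝ) + (l : ℝ) = 1 := by nlinarith
      have hkl' : k + l = 1 := by exact_mod_cast hkl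
      have hk0' : 0 ≤ k := by exact_mod_cast hk0
      have hl0' : 0 ≤ l := by exact_mod_cast hl0
      have : k = 0 ∨ l = 0 := by omega
      rcases this with h | h
      · right
        have hu0 : u = 0 := by
          rw [← @inner_self_eq_zero ℝ]
          rw [hk, h]
          norm_num
        rw [← huw, hu0, zero_add]
        exact hw
      · left
        have hw0 : w = 0 := by
          rw [← @inner_self_eq_zero ℝ]
          rw [hl, h]
          norm_num
        rw [← huw, hw0, add_zero]
        exact hu
    by_cases hall1 : ∀ x, H.IsSlim x → ψ x ∈ L₁
    · right
      have hLle : Submodule.span ℤ G ≤ L₁ := by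
        apply Submodule.span_le.mpr
        rintro _ ⟨x, hx, rfl⟩
        exact hall1 x hx
      rw [Submodule.eq_bot_iff]
      intro v hv
      have hv1 : v ∈ L₁ := hLle (hL₂ hv)
      have h0 := horth v hv1 v hv
      rwa [@inner_self_eq_zero ℝ] at h0
    · by_cases hall2 : ∀ x, H.IsSlim x → ψ x ∈ L₂
      · left
        have hLle : Submodule.span ℤ G ≤ L₂ := by
          apply Submodule.span_le.mpr
          rintro _ ⟨x, hx, rfl⟩
          exact hall2 x hx
        rw [Submodule.eq_bot_iff]
        intro v hv
        have hv2 : v ∈ L₂ := hLle (hL₁ hv)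
        have h0 := horth v hv v hv2
        rwa [@inner_self_eq_zero ℝ] at h0
      · exfalso
        push_neg at hall1 hall2
        obtain ⟨y, hy, hyn⟩ := hall1
        obtain ⟨z, hz, hzn⟩ := hall2
        have hzP : ψ z ∈ L₁ := (hdich z hz).resolve_right hzn
        have hyP : ψ y ∈ L₂ := (hdich y hy).resolve_left hyn
        apply no_orthogonal_partition H hind {v | ψ v ∈ L₁} ⟨z, hz, hzP⟩ ⟨y, hy, hyn⟩
        intro a b ha hb haP hbP
        have hbL2 : ψ b ∈ L₂ := (hdich b hb).resolve_left hbP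
        have hip : ⟪ψ a, ψ b⟫ = 0 := horth _ haP _ hbL2
        have hab : a ≠ b := by
          rintro rfl
          exact hbP haP
        exact cross_of_inner_zero H hψ ha hb hab hip

lemma part_ii [Nonempty V] (H : HoffmanGraph V) (hfat : H.IsFatGraph)
    (hind : H.Indecomposable) {d : ℕ} {ψ : V → EuclideanSpace ℝ (Fin d)}
    (hψ : H.IsReducedRep 3 ψ) (hle : ∀ x, H.IsSlim x → H.fatDeg x ≤ 2)
    (hex : ∃ x, H.IsSlim x ∧ H.fatDeg x = 2) :
    ∃ n : ℕ, 0 < n ∧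
      ∃ g : (Submodule.span ℤ (ψ '' {v | H.IsSlim v})) ≃ₗ[ℤ] (Fin n → ℤ),
        ∀ u v : Submodule.span ℤ (ψ '' {v | H.IsSlim v}),
          ⟪(u : EuclideanSpace ℝ (Fin d)), (v : EuclideanSpace ℝ (Fin d))⟫ =
            ∑ i, (g u i : ℝ) * (g v i : ℝ) := by
  set G := ψ '' {v | H.IsSlim v} with hGdef
  have hG := gram H hψ
  have hnorm : ∀ g ∈ G, ⟪g, g⟫ = (1 : ℝ) ∨ ⟪g, g⟫ = (2 : ℝ) := by
    rintro _ ⟨x, hx, rfl⟩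
    have ha := one_le_fatDeg H hfat hx
    have hb := hle x hx
    rw [hψ.1 x hx]
    have : H.fatDeg x = 1 ∨ H.fatDeg x = 2 := by omega
    rcases this with h | h <;> rw [h] <;> [right; left] <;> norm_num
  obtain ⟨x₀, hx₀, hx₀2⟩ := hex
  have he1 : ⟪ψ x₀, ψ x₀⟫ = (1 : ℝ) := by
    rw [hψ.1 x₀ hx₀, hx₀2]
    norm_num
  have hsub : G ⊆ (Submodule.span ℤ
      {u : EuclideanSpace ℝ (Fin d) | u ∈ Submodule.span ℤ G ∧ ⟪u, u⟫ = (1 : ℝ)} : Set _) := by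
    intro g hg
    obtain ⟨y, hy, rfl⟩ := hg
    by_contra hyM
    apply no_orthogonal_partition H hind
      {v | ψ v ∈ Submodule.span ℤ
        {u : EuclideanSpace ℝ (Fin d) | u ∈ Submodule.span ℤ G ∧ ⟪u, u⟫ = (1 : ℝ)}}
      ⟨x₀, hx₀, Submodule.subset_span ⟨Submodule.subset_span ⟨x₀, hx₀, rfl⟩, he1⟩⟩
      ⟨y, hy, hyM⟩
    intro a b ha hb haP hbP
    have hip : ⟪ψ a, ψ b⟫ = 0 := by
      by_contra hne
      apply hbP
      apply mem_unit_span_of_inner_ne_zero hG (Submodule.subset_span ⟨b, hb, rfl⟩)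
        (hnorm _ ⟨b, hb, rfl⟩) haP
      rw [real_inner_comm]
      exact hne
    have hab : a ≠ b := by
      rintro rfl
      exact hbP haP
    exact cross_of_inner_zero H hψ ha hb hab hip
  exact exists_std_basis G hG hsub ⟨ψ x₀, Submodule.subset_span ⟨x₀, hx₀, rfl⟩, he1⟩

end HG3Aux

/-- Theorem 3.7: in a fat indecomposable Hoffman graph with smallest eigenvalue at least
`-3`, every slim vertex has at most three fat neighbors; moreover (i) if some slim vertex
has three fat neighbors then `𝔥 ≅ 𝔥^(3)`; (ii) if no slim vertex has three fat neighbors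
and some slim vertex has exactly two, then `Λ^red(𝔥,3) ≅ ℤⁿ` for some `n ≥ 1`; (iii) if
every slim vertex has exactly one fat neighbor, then `Λ^red(𝔥,3)` is an irreducible root
lattice. -/
theorem special_lattice_trichotomy {V : Type} [Fintype V] [Nonempty V]
    (H : HoffmanGraph V) (hfat : H.IsFatGraph) (hind : H.Indecomposable)
    (hmin : -3 ≤ H.lambdaMin) :
    (∀ x, H.IsSlim x → H.fatDeg x ≤ 3) ∧
    ((∃ x, H.IsSlim x ∧ H.fatDeg x = 3) → H.IsIsoTo (HoffmanGraph.manyFat 3)) ∧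
    (∀ (d : ℕ) (ψ : V → EuclideanSpace ℝ (Fin d)), H.IsReducedRep 3 ψ →
      ((((∀ x, H.IsSlim x → H.fatDeg x ≤ 2) ∧ ∃ x, H.IsSlim x ∧ H.fatDeg x = 2) →
        ∃ n : ℕ, 0 < n ∧
          ∃ g : (Submodule.span ℤ (ψ '' {v | H.IsSlim v})) ≃ₗ[ℤ] (Fin n → ℤ),
            ∀ u v : Submodule.span ℤ (ψ '' {v | H.IsSlim v}),
              ⟪(u : EuclideanSpace ℝ (Fin d)), (v : EuclideanSpace ℝ (Fin d))⟫ =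
                ∑ i, (g u i : ℝ) * (g v i : ℝ)) ∧
      ((∀ x, H.IsSlim x → H.fatDeg x = 1) →
        IsRootLattice (Submodule.span ℤ (ψ '' {v | H.IsSlim v})) ∧
        IsIrreducibleLattice (Submodule.span ℤ (ψ '' {v | H.IsSlim v}))))) := by
  refine ⟨fun x hx => HG3Aux.fatDeg_le_three H hmin hx, ?_, ?_⟩
  · rintro ⟨x, hx, h3⟩
    exact HG3Aux.iso_manyFat H hind hmin hx h3
  · intro d ψ hψ
    constructor
    · rintro ⟨hle, hex⟩
      exact HG3Aux.part_ii H hfat hind hψ hle hex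
    · intro h1
      exact HG3Aux.part_iii H hind hψ h1
end
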